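/- arXiv:1808.09486 — 4 statements merged into one kernel-verified Lean document; each statement's English description precedes it below -/
import Mathlib

section
/- Let u, v, w be words over a finite alphabet A such that v respects the transition to w, and let S = {s_1 < … < s_m} ⊆ O_v(u). Then every occurrence of v in u not explicitly replaced persists: if p ∈ O_v(u) ∖ S and s_i < p < s_{i+1} (for some 0 ≤ i ≤ m, with the conventions s_0 = −∞ and s_{m+1} = +∞), then p + i(|w|−|v|) ∈ O_v(R_u^{v→w}(S)). -/
/-- `v` occurs in `u` at position `i`, i.e. `u_{[i, i+|v|)} = v`. -/
def occursAt {A : Type*} (v u : List A) (i : ℕ) : Prop :=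
  (u.drop i).take v.length = v

/-- `O_v(u)`: the set of positions at which `v` occurs in `u`. -/
def occSet {A : Type*} (v u : List A) : Set ℕ := {i | occursAt v u i}

/-- `O_v(u)` viewed as a subset of `ℤ`. -/
def occSetZ {A : Type*} (v u : List A) : Set ℤ :=
  {i | ∃ k : ℕ, (k : ℤ) = i ∧ occursAt v u k}

/-- `R_u^{v→w}(i)`: replace the occurrence of `v` at position `i` in `u` by `w`. -/
def replaceAt {A : Type*} (v w u : List A) (i : ℕ) : List A :=
  u.take i ++ w ++ u.drop (i + v.length)

/-- Sequential replacement of `v` by `w` at a list of positions (given in the coordinates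
of the original word; after each replacement the remaining positions shift by `|w| - |v|`):
`u¹ = u`, `u^{r+1} = R_{uʳ}^{v→w}(s_r + (r-1)(|w|-|v|))`. -/
def seqReplace {A : Type*} (v w : List A) : List A → List ℤ → List A
  | u, [] => u
  | u, s :: rest =>
      seqReplace v w (replaceAt v w u s.toNat)
        (rest.map (· + ((w.length : ℤ) - (v.length : ℤ))))
  termination_by _ l => l.length
  decreasing_by simp [List.length_map]

/-- `R_u^{v→w}(S)`: replace `v` by `w` at all positions of `S`, from left to right. -/
def replaceSet {A : Type*} (v w u : List A) (S : Finset ℕ) : List A :=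
  seqReplace v w u ((S.sort (· ≤ ·)).map (fun k : ℕ => (k : ℤ)))

/-- `v` respects the transition to `w` (conditions (i)-(iv)). -/
def Respects {A : Type*} (v w : List A) : Prop :=
  ∀ u : List A, ∀ i ∈ occSet v u,
    (∀ j ∈ occSet v u, i < j →
      ((j : ℤ) + (w.length : ℤ) - (v.length : ℤ)) ∈ occSetZ v (replaceAt v w u i)) ∧
    (∀ j ∈ occSet v u, j < i → j ∈ occSet v (replaceAt v w u i)) ∧
    (∀ j ∈ occSet w u, j < i → j ∈ occSet w (replaceAt v w u i)) ∧
    (∀ j ∈ occSet v u, i < j → (i : ℤ) < (j : ℤ) + (w.length : ℤ) - (v.length : ℤ))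

lemma filter_map_length7 {α β : Type*} (f : α → β) (q : β → Bool) (r : α → Bool) :
    ∀ l : List α, (∀ j ∈ l, q (f j) = r j) →
      ((l.map f).filter q).length = (l.filter r).length := by
  intro l
  induction l with
  | nil => simp
  | cons a t ih =>
    intro h
    have ha := h a (List.mem_cons_self)
    have ht := ih (fun j hj => h j (List.mem_cons_of_mem _ hj))
    simp only [List.map_cons, List.filter_cons, ha]
    cases r a <;> simp [ht]

lemma aux7 {A : Type*} (v w : List A) (hresp : Respects v w) :
    ∀ (n : ℕ) (L : List ℕ) (u : List A), L.length = n →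
    L.Pairwise (· < ·) → (∀ s ∈ L, s ∈ occSet v u) →
    ∀ p, p ∈ occSet v u → p ∉ L →
    ((p : ℤ) + ((L.filter (fun s => s < p)).length : ℤ) * ((w.length : ℤ) - (v.length : ℤ)))
      ∈ occSetZ v (seqReplace v w u (L.map (fun k : ℕ => (k : ℤ)))) := by
  intro n
  induction n with
  | zero =>
    intro L u hlen _ _ p hp _
    rw [List.length_eq_zero_iff] at hlen
    subst hlen
    simpa [seqReplace] using ⟨p, rfl, hp⟩
  | succ n ih =>
    rintro (_ | ⟨s, rest⟩) u hlen hsort hocc p hp hpL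
    · simp at hlen
    have hlen' : rest.length = n := by simpa using hlen
    set d : ℤ := (w.length : ℤ) - (v.length : ℤ) with hd
    obtain ⟨hall, hsort'⟩ := List.pairwise_cons.mp hsort
    have hs : s ∈ occSet v u := hocc s (List.mem_cons_self)
    obtain ⟨h1, h2, h3, h4⟩ := hresp u s hs
    set u' := replaceAt v w u s with hu'
    have hshift : ∀ j ∈ rest, (s : ℤ) < (j : ℤ) + d := by
      intro j hj
      have := h4 j (hocc j (List.mem_cons_of_mem _ hj)) (hall j hj)
      linarith
    set f : ℕ → ℕ := fun j => ((j : ℤ) + d).toNat with hf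
    have hfval : ∀ j ∈ rest, ((f j : ℕ) : ℤ) = (j : ℤ) + d := by
      intro j hj
      have h := hshift j hj
      simp only [hf]
      exact Int.toNat_of_nonneg (by omega)
    have hfocc : ∀ j ∈ rest, f j ∈ occSet v u' := by
      intro j hj
      obtain ⟨k, hk, hkocc⟩ := h1 j (hocc j (List.mem_cons_of_mem _ hj)) (hall j hj)
      have h5 := hfval j hj
      rw [hd] at h5
      have : k = f j := by omega
      rwa [← this]
    have hstep : seqReplace v w u (((s :: rest)).map (fun k : ℕ => (k : ℤ)))
        = seqReplace v w u' ((rest.map f).map (fun k : ℕ => (k : ℤ))) := by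
      rw [List.map_cons, seqReplace]
      have harg : replaceAt v w u ((s : ℤ)).toNat = u' := by
        simp [hu', Int.toNat_natCast]
      rw [harg]
      have hmaps : (rest.map (fun k : ℕ => (k : ℤ))).map
            (· + ((w.length : ℤ) - (v.length : ℤ)))
          = (rest.map f).map (fun k : ℕ => (k : ℤ)) := by
        rw [List.map_map, List.map_map]
        refine List.map_congr_left ?_
        intro j hj
        have h5 := hfval j hj
        rw [hd] at h5
        simp only [Function.comp]
        omega
      rw [hmaps]
    rw [hstep]
    have hlen'' : (rest.map f).length = n := by simpa using hlen'
    have hsort'' : (rest.map f).Pairwise (· < ·) := by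
      rw [List.pairwise_map]
      apply hsort'.imp_of_mem
      intro a b ha hb hab
      have h1' := hfval a ha
      have h2' := hfval b hb
      have : ((f a : ℕ) : ℤ) < ((f b : ℕ) : ℤ) := by rw [h1', h2']; omega
      exact_mod_cast this
    have hocc'' : ∀ t ∈ rest.map f, t ∈ occSet v u' := by
      intro t ht
      obtain ⟨j, hj, hje⟩ := List.mem_map.mp ht
      exact hje ▸ hfocc j hj
    have hne : p ≠ s := fun h => hpL (by rw [h]; exact List.mem_cons_self)
    rcases lt_or_gt_of_ne hne with hps | hps
    · -- p < s
      have hp' : p ∈ occSet v u' := h2 p hp hps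
      have hpnot : p ∉ rest.map f := by
        intro hmem
        obtain ⟨j, hj, hje⟩ := List.mem_map.mp hmem
        have h1' := hfval j hj
        have h2' := hshift j hj
        omega
      have hmain := ih (rest.map f) u' hlen'' hsort'' hocc'' p hp' hpnot
      have hcount : ((rest.map f).filter (fun t => t < p)).length = 0 := by
        rw [List.length_eq_zero_iff, List.filter_eq_nil_iff]
        intro t ht
        obtain ⟨j, hj, hje⟩ := List.mem_map.mp ht
        have h1' := hfval j hj
        have h2' := hshift j hj
        simp only [decide_eq_true_eq]
        omega
      have hcount2 : (((s :: rest)).filter (fun t => t < p)).length = 0 := by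
        rw [List.length_eq_zero_iff, List.filter_eq_nil_iff]
        intro t ht
        rcases List.mem_cons.mp ht with rfl | ht
        · simp only [decide_eq_true_eq]; omega
        · have := hall t ht; simp only [decide_eq_true_eq]; omega
      rw [hcount2]
      rw [hcount] at hmain
      exact hmain
    · -- s < p
      set p' : ℕ := f p with hp'def
      have hpd : (s : ℤ) < (p : ℤ) + d := by
        have := h4 p hp hps; linarith
      have hpval : ((p' : ℕ) : ℤ) = (p : ℤ) + d := by
        simp only [hp'def, hf]
        exact Int.toNat_of_nonneg (by omega)
      have hpocc : p' ∈ occSet v u' := by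
        obtain ⟨k, hk, hkocc⟩ := h1 p hp hps
        have h5 := hpval
        rw [hd] at h5
        have : k = p' := by omega
        rwa [← this]
      have hpnot : p' ∉ rest.map f := by
        intro hmem
        obtain ⟨j, hj, hje⟩ := List.mem_map.mp hmem
        have hj1 := hfval j hj
        have hje' : ((f j : ℕ) : ℤ) = ((p' : ℕ) : ℤ) := by rw [hje]
        rw [hj1, hpval] at hje'
        have : j = p := by omega
        exact hpL (List.mem_cons_of_mem _ (this ▸ hj))
      have hmain := ih (rest.map f) u' hlen'' hsort'' hocc'' p' hpocc hpnot
      have hcount : ((rest.map f).filter (fun t => decide (t < p'))).length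
          = (rest.filter (fun t => decide (t < p))).length := by
        apply filter_map_length7
        intro j hj
        have h1' := hfval j hj
        simp only [decide_eq_decide]
        omega
      rw [hcount] at hmain
      obtain ⟨k, hk, hkocc⟩ := hmain
      refine ⟨k, ?_, hkocc⟩
      rw [hk, hpval]
      have hcount2 : (((s :: rest)).filter (fun t => t < p)).length
          = (rest.filter (fun t => t < p)).length + 1 := by
        rw [List.filter_cons]
        simp [hps]
      rw [hcount2]
      push_cast
      ring

/-- Lemma (vsurvive): if `v` respects the transition to `w`, `S ⊆ O_v(u)`, and
`p ∈ O_v(u) ∖ S` with exactly `i` elements of `S` below `p`, then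
`p + i(|w|-|v|) ∈ O_v(R_u^{v→w}(S))`. -/
theorem statement7 {A : Type*} [Fintype A] (v w u : List A)
    (hresp : Respects v w) (S : Finset ℕ) (hS : ↑S ⊆ occSet v u)
    (p : ℕ) (hp : p ∈ occSet v u) (hpS : p ∉ S) :
    ((p : ℤ) + ((S.filter (fun s => s < p)).card : ℤ) * ((w.length : ℤ) - (v.length : ℤ)))
      ∈ occSetZ v (replaceSet v w u S) := by
  have hsort := (Finset.sortedLT_sort S).pairwise
  have hkey := aux7 v w hresp (S.sort (· ≤ ·)).length (S.sort (· ≤ ·)) u rfl hsort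
    (fun s hs => hS ((Finset.mem_sort (α := ℕ) (· ≤ ·)).mp hs)) p hp
    (fun h => hpS ((Finset.mem_sort (α := ℕ) (· ≤ ·)).mp h))
  have hcard : ((S.sort (· ≤ ·)).filter (fun s => s < p)).length
      = (S.filter (fun s => s < p)).card := by
    have h0 : (S.filter (fun s => s < p)).card
        = Multiset.card (Multiset.filter (fun s => s < p) S.val) := rfl
    rw [h0, ← Finset.sort_eq S (· ≤ ·)]
    simp only [Multiset.filter_coe, Multiset.coe_card]
  rw [← hcard]
  exact hkey
end

section
/- Let v, w be words over a finite alphabet A such that v respects the transition to w, v is not a suffix of w, and w is not a prefix of v. Then for every word u and every m, the map S ↦ R_u^{v→w}(S) is injective on the collection of m-element subsets of O_v(u). -/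
namespace Stmt8

variable {A : Type*} {v w : List A}

/-! ### Basic facts about `occursAt` and `replaceAt` -/

lemma occ_bound (hv : v ≠ []) {u : List A} {i : ℕ} (h : occursAt v u i) :
    i + v.length ≤ u.length := by
  have hlen := congrArg List.length h
  simp only [List.length_take, List.length_drop] at hlen
  have h1 : v.length ≤ u.length - i := hlen ▸ min_le_right _ _
  have h2 : 0 < v.length := List.length_pos_iff.mpr hv
  omega

lemma replaceAt_take {u : List A} {i q : ℕ} (hq : q ≤ i) (hi : i ≤ u.length) :
    (replaceAt v w u i).take q = u.take q := by
  unfold replaceAt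
  rw [List.append_assoc, List.take_append_of_le_length (by simp; omega), List.take_take,
    min_eq_left hq]

lemma replaceAt_drop {u : List A} {i : ℕ} (hi : i ≤ u.length) :
    (replaceAt v w u i).drop i = w ++ u.drop (i + v.length) := by
  unfold replaceAt
  rw [List.append_assoc]
  have hl : (u.take i).length = i := by simp [hi]
  exact List.drop_left' hl

lemma replaceAt_occ_w {u : List A} {i : ℕ} (hi : i ≤ u.length) :
    occursAt w (replaceAt v w u i) i := by
  unfold occursAt
  rw [replaceAt_drop hi, List.take_append_of_le_length (le_refl _), List.take_length]

lemma replaceAt_drop_after {u : List A} {i : ℕ} (hi : i ≤ u.length) :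
    (replaceAt v w u i).drop (i + w.length) = u.drop (i + v.length) := by
  rw [← List.drop_drop, replaceAt_drop hi, List.drop_left]

lemma occursAt_recover {u : List A} {i : ℕ} (h : occursAt v u i) :
    u = u.take i ++ v ++ u.drop (i + v.length) := by
  conv_lhs => rw [← List.take_append_drop i u]
  rw [List.append_assoc]
  congr 1
  conv_lhs => rw [← List.take_append_drop v.length (u.drop i)]
  rw [h, List.drop_drop]

lemma replaceAt_length {u : List A} {i : ℕ} (hi : i + v.length ≤ u.length) :
    (replaceAt v w u i).length = u.length + w.length - v.length := by
  simp [replaceAt]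
  omega

lemma replaceAt_inj (hv : v ≠ []) {a b : List A} {i : ℕ}
    (ha : occursAt v a i) (hb : occursAt v b i)
    (h : replaceAt v w a i = replaceAt v w b i) : a = b := by
  have hia := occ_bound hv ha
  have hib := occ_bound hv hb
  have h1 : a.take i = b.take i := by
    have := congrArg (List.take i) h
    rwa [replaceAt_take le_rfl (by omega), replaceAt_take le_rfl (by omega)] at this
  have h2 : a.drop (i + v.length) = b.drop (i + v.length) := by
    have := congrArg (List.drop (i + w.length)) h
    rwa [replaceAt_drop_after (by omega), replaceAt_drop_after (by omega)] at this
  rw [occursAt_recover ha, occursAt_recover hb, h1, h2]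


/-! ### Valid chains of replacements -/

/-- shift amount -/
@[simp] def dd (v w : List A) : ℤ := (w.length : ℤ) - (v.length : ℤ)

/-- A valid chain of replacement positions (already shifted to the coordinates of `u`). -/
inductive Valid (v w : List A) : List A → List ℤ → Prop
  | nil (u : List A) : Valid v w u []
  | cons {u : List A} {s : ℤ} {l : List ℤ} :
      0 ≤ s → occursAt v u s.toNat →
      (∀ x ∈ l, s < x) →
      (∀ x ∈ l, 0 ≤ x ∧ occursAt v u x.toNat) →
      Valid v w (replaceAt v w u s.toNat) (l.map (· + ((w.length : ℤ) - (v.length : ℤ)))) →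
      Valid v w u (s :: l)

lemma seqReplace_cons (u : List A) (s : ℤ) (l : List ℤ) :
    seqReplace v w u (s :: l) =
      seqReplace v w (replaceAt v w u s.toNat)
        (l.map (· + ((w.length : ℤ) - (v.length : ℤ)))) := by
  rw [seqReplace]

lemma valid_mem {u : List A} {l : List ℤ} (h : Valid v w u l) :
    ∀ x ∈ l, 0 ≤ x ∧ occursAt v u x.toNat := by
  cases h with
  | nil => intro x hx; simp at hx
  | cons h0 hocc hlt hmem htail =>
    intro x hx
    rcases List.mem_cons.mp hx with rfl | hx
    · exact ⟨h0, hocc⟩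
    · exact hmem x hx

section Chain
variable (hv : v ≠ []) (hresp : Respects v w)
include hv hresp

omit hv in
/-- condition (iv), in convenient form -/
lemma four {u : List A} {s x : ℤ} (h0 : 0 ≤ s) (hocc : occursAt v u s.toNat)
    (hx : 0 ≤ x) (hxo : occursAt v u x.toNat) (hsx : s < x) :
    s < x + ((w.length : ℤ) - (v.length : ℤ)) := by
  have h4 := (hresp u s.toNat hocc).2.2.2 x.toNat hxo (by omega)
  omega

omit hv in
/-- condition (i), in convenient form -/
lemma one {u : List A} {s x : ℤ} (h0 : 0 ≤ s) (hocc : occursAt v u s.toNat)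
    (hx : 0 ≤ x) (hxo : occursAt v u x.toNat) (hsx : s < x) :
    0 ≤ x + ((w.length : ℤ) - (v.length : ℤ)) ∧
      occursAt v (replaceAt v w u s.toNat)
        (x + ((w.length : ℤ) - (v.length : ℤ))).toNat := by
  have h1 := (hresp u s.toNat hocc).1 x.toNat hxo (by omega)
  obtain ⟨k, hk, hkocc⟩ := h1
  refine ⟨by omega, ?_⟩
  have : (x + ((w.length : ℤ) - (v.length : ℤ))).toNat = k := by omega
  rwa [this]

lemma take_seqReplace {u : List A} {l : List ℤ} (hval : Valid v w u l) :
    ∀ q : ℕ, (∀ x ∈ l, (q : ℤ) ≤ x) → q ≤ u.length →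
      (seqReplace v w u l).take q = u.take q := by
  induction hval with
  | nil => intro q _ _; rw [seqReplace]
  | @cons u s l h0 hocc hlt hmem hvtail ih =>
    intro q hq hqu
    have hsb := occ_bound hv hocc
    have hqs : (q : ℤ) ≤ s := hq s List.mem_cons_self
    rw [seqReplace_cons, ih q ?_ ?_, replaceAt_take (by omega) (by omega)]
    · intro y hy
      obtain ⟨x, hx, rfl⟩ := List.mem_map.mp hy
      have := four hresp h0 hocc (hmem x hx).1 (hmem x hx).2 (hlt x hx)
      omega
    · rw [replaceAt_length (by omega)]
      omega

lemma occw_seqReplace {u : List A} {l : List ℤ} (hval : Valid v w u l) :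
    ∀ j : ℕ, occursAt w u j → (∀ x ∈ l, (j : ℤ) < x) →
      occursAt w (seqReplace v w u l) j := by
  induction hval with
  | nil => intro j hj _; rw [seqReplace]; exact hj
  | @cons u s l h0 hocc hlt hmem hvtail ih =>
    intro j hj hjl
    have hjs : (j : ℤ) < s := hjl s List.mem_cons_self
    have h3 := (hresp u s.toNat hocc).2.2.1 j hj (by omega)
    rw [seqReplace_cons]
    refine ih j h3 ?_
    intro y hy
    obtain ⟨x, hx, rfl⟩ := List.mem_map.mp hy
    have := four hresp h0 hocc (hmem x hx).1 (hmem x hx).2 (hlt x hx)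
    omega

lemma occv_seqReplace {u : List A} {l : List ℤ} (hval : Valid v w u l) :
    ∀ j : ℕ, occursAt v u j → (∀ x ∈ l, (j : ℤ) < x) →
      occursAt v (seqReplace v w u l) j := by
  induction hval with
  | nil => intro j hj _; rw [seqReplace]; exact hj
  | @cons u s l h0 hocc hlt hmem hvtail ih =>
    intro j hj hjl
    have hjs : (j : ℤ) < s := hjl s List.mem_cons_self
    have h2 := (hresp u s.toNat hocc).2.1 j hj (by omega)
    rw [seqReplace_cons]
    refine ih j h2 ?_
    intro y hy
    obtain ⟨x, hx, rfl⟩ := List.mem_map.mp hy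
    have := four hresp h0 hocc (hmem x hx).1 (hmem x hx).2 (hlt x hx)
    omega

omit hv in
lemma image_seqReplace {u : List A} {l : List ℤ} (hval : Valid v w u l) :
    ∀ j : ℕ, occursAt v u j → (∀ x ∈ l, x < (j : ℤ)) →
      ∃ k : ℕ, (k : ℤ) = (j : ℤ) + l.length * ((w.length : ℤ) - (v.length : ℤ)) ∧
        occursAt v (seqReplace v w u l) k := by
  induction hval with
  | nil => intro j hj _; exact ⟨j, by simp, by rw [seqReplace]; exact hj⟩
  | @cons u s l h0 hocc hlt hmem hvtail ih =>
    intro j hj hjl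
    have hjs : s < (j : ℤ) := hjl s List.mem_cons_self
    have hj' : occursAt v u ((j : ℤ)).toNat := by simpa using hj
    obtain ⟨hk0, hkocc⟩ := one hresp h0 hocc (by positivity) hj' hjs
    obtain ⟨k, hk, hkr⟩ := ih (((j : ℤ) + ((w.length : ℤ) - (v.length : ℤ))).toNat) hkocc
      (by
        intro y hy
        obtain ⟨x, hx, rfl⟩ := List.mem_map.mp hy
        have := hjl x (List.mem_cons_of_mem _ hx)
        omega)
    refine ⟨k, ?_, by rwa [seqReplace_cons]⟩
    rw [List.length_map] at hk
    rw [Int.toNat_of_nonneg hk0] at hk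
    rw [List.length_cons]
    push_cast at hk ⊢
    linarith

lemma occw_head {u : List A} {s : ℤ} {l : List ℤ} (hval : Valid v w u (s :: l)) :
    occursAt w (seqReplace v w u (s :: l)) s.toNat := by
  cases hval with
  | cons h0 hocc hlt hmem hvtail =>
    have hsb := occ_bound hv hocc
    rw [seqReplace_cons]
    refine occw_seqReplace hv hresp hvtail s.toNat (replaceAt_occ_w (by omega)) ?_
    intro y hy
    obtain ⟨x, hx, rfl⟩ := List.mem_map.mp hy
    have := four hresp h0 hocc (hmem x hx).1 (hmem x hx).2 (hlt x hx)
    omega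

lemma length_seqReplace {u : List A} {l : List ℤ} (hval : Valid v w u l) :
    ((seqReplace v w u l).length : ℤ) =
      (u.length : ℤ) + l.length * ((w.length : ℤ) - (v.length : ℤ)) := by
  induction hval with
  | nil => rw [seqReplace]; simp
  | @cons u s l h0 hocc hlt hmem hvtail ih =>
    have hsb := occ_bound hv hocc
    rw [seqReplace_cons]
    rw [List.length_map] at ih
    have hlen : ((replaceAt v w u s.toNat).length : ℤ) = (u.length : ℤ) +
        ((w.length : ℤ) - (v.length : ℤ)) := by
      rw [replaceAt_length (by omega)]; push_cast; omega
    rw [ih, hlen, List.length_cons]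
    push_cast
    ring

omit hv hresp in
lemma seqReplace_concat (l : List ℤ) (u : List A) (s : ℤ) :
    seqReplace v w u (l ++ [s]) =
      replaceAt v w (seqReplace v w u l)
        (s + l.length * ((w.length : ℤ) - (v.length : ℤ))).toNat := by
  suffices h : ∀ (n : ℕ) (l : List ℤ) (u : List A) (s : ℤ), l.length = n →
      seqReplace v w u (l ++ [s]) =
        replaceAt v w (seqReplace v w u l)
          (s + l.length * ((w.length : ℤ) - (v.length : ℤ))).toNat from
    h _ l u s rfl
  intro n
  induction n with
  | zero =>
    intro l u s hn
    obtain rfl : l = [] := List.length_eq_zero_iff.mp hn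
    simp [seqReplace]
  | succ n ih =>
    intro l u s hn
    obtain ⟨x, t, rfl⟩ : ∃ x t, l = x :: t := by
      cases l with
      | nil => simp at hn
      | cons a b => exact ⟨a, b, rfl⟩
    have htn : t.length = n := by simpa using hn
    rw [List.cons_append, seqReplace_cons, List.map_append, List.map_cons, List.map_nil,
      ih _ _ _ (by simpa using htn), seqReplace_cons]
    congr 2
    rw [List.length_map, htn, List.length_cons, htn]
    push_cast
    ring

omit hv hresp in
lemma valid_concat {l : List ℤ} {s : ℤ} {u : List A} (hval : Valid v w u (l ++ [s])) :
    Valid v w u l ∧ ∀ x ∈ l, x < s := by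
  suffices h : ∀ (n : ℕ) (l : List ℤ) (s : ℤ) (u : List A), l.length = n →
      Valid v w u (l ++ [s]) → Valid v w u l ∧ ∀ x ∈ l, x < s from
    h _ l s u rfl hval
  clear hval
  intro n
  induction n with
  | zero =>
    intro l s u hn _
    obtain rfl : l = [] := List.length_eq_zero_iff.mp hn
    exact ⟨Valid.nil u, by simp⟩
  | succ n ih =>
    intro l s u hn hval
    obtain ⟨x, t, rfl⟩ : ∃ x t, l = x :: t := by
      cases l with
      | nil => simp at hn
      | cons a b => exact ⟨a, b, rfl⟩
    have htn : t.length = n := by simpa using hn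
    rw [List.cons_append] at hval
    cases hval with
    | cons h0 hocc hlt hmem hvtail =>
      rw [List.map_append, List.map_cons, List.map_nil] at hvtail
      obtain ⟨hvt, hxs⟩ := ih _ _ _ (by simpa using htn) hvtail
      constructor
      · exact Valid.cons h0 hocc (fun y hy => hlt y (List.mem_append_left _ hy))
          (fun y hy => hmem y (List.mem_append_left _ hy)) hvt
      · intro y hy
        rcases List.mem_cons.mp hy with rfl | hy
        · exact hlt s (List.mem_append_right _ (List.mem_singleton_self _))
        · have := hxs (y + ((w.length : ℤ) - (v.length : ℤ)))
            (List.mem_map.mpr ⟨y, hy, rfl⟩)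
          omega

omit hv in
lemma valid_of {l : List ℤ} {u : List A} (hs : l.Pairwise (· < ·))
    (hm : ∀ x ∈ l, 0 ≤ x ∧ occursAt v u x.toNat) : Valid v w u l := by
  suffices h : ∀ (n : ℕ) (l : List ℤ) (u : List A), l.length = n → l.Pairwise (· < ·) →
      (∀ x ∈ l, 0 ≤ x ∧ occursAt v u x.toNat) → Valid v w u l from
    h _ l u rfl hs hm
  clear hs hm
  intro n
  induction n with
  | zero =>
    intro l u hn _ _
    obtain rfl : l = [] := List.length_eq_zero_iff.mp hn
    exact Valid.nil u
  | succ n ih =>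
    intro l u hn hs hm
    obtain ⟨x, t, rfl⟩ : ∃ x t, l = x :: t := by
      cases l with
      | nil => simp at hn
      | cons a b => exact ⟨a, b, rfl⟩
    have htn : t.length = n := by simpa using hn
    rw [List.pairwise_cons] at hs
    obtain ⟨h0, hocc⟩ := hm x List.mem_cons_self
    refine Valid.cons h0 hocc hs.1 (fun y hy => hm y (List.mem_cons_of_mem _ hy)) ?_
    refine ih _ _ (by simpa using htn) ?_ ?_
    · refine List.Pairwise.map _ ?_ hs.2
      intro a b hab
      omega
    · intro y hy
      obtain ⟨z, hz, rfl⟩ := List.mem_map.mp hy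
      obtain ⟨hz0, hzo⟩ := hm z (List.mem_cons_of_mem _ hz)
      exact one hresp h0 hocc hz0 hzo (hs.1 z hz)

end Chain


/-! ### Main injectivity argument -/

lemma valid_head_lt {u : List A} {s : ℤ} {l : List ℤ} (h : Valid v w u (s :: l)) :
    ∀ x ∈ l, s < x := by
  cases h with
  | cons _ _ hlt _ _ => exact hlt

lemma head_lt (hv : v ≠ []) (hresp : Respects v w) (hpre : ¬ w <+: v)
    {u : List A} {a b : ℤ} {r₁ r₂ : List ℤ}
    (h₁ : Valid v w u (a :: r₁)) (h₂ : Valid v w u (b :: r₂)) (hab : a < b)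
    (hZ : seqReplace v w u (a :: r₁) = seqReplace v w u (b :: r₂)) :
    v.length < w.length := by
  have ha0 : 0 ≤ a := (valid_mem h₁ a List.mem_cons_self).1
  have haocc : occursAt v u a.toNat := (valid_mem h₁ a List.mem_cons_self).2
  have hwZ : occursAt w (seqReplace v w u (a :: r₁)) a.toNat := occw_head hv hresp h₁
  have hvZ : occursAt v (seqReplace v w u (a :: r₁)) a.toNat := by
    rw [hZ]
    refine occv_seqReplace hv hresp h₂ a.toNat haocc ?_
    intro x hx
    rcases List.mem_cons.mp hx with rfl | hx
    · omega
    · have := valid_head_lt h₂ x hx; omega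
  by_contra hwv
  refine hpre ?_
  have h2 : ((seqReplace v w u (a :: r₁)).drop a.toNat).take v.length = v := hvZ
  have h1 : ((seqReplace v w u (a :: r₁)).drop a.toNat).take w.length = w := hwZ
  have hvw : v.take w.length = w := by
    rw [← h2, List.take_take, min_eq_left (by omega)]
    exact h1
  exact hvw ▸ List.take_prefix w.length v

lemma last_lt_contra (hv : v ≠ []) (hresp : Respects v w) (hsuf : ¬ v <:+ w)
    (hδ : v.length < w.length) {u : List A} {rA rB : List ℤ} {M N : ℤ}
    (hA : Valid v w u (rA ++ [M])) (hB : Valid v w u (rB ++ [N]))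
    (hlen : rA.length = rB.length) (hMN : M < N)
    (hZ : seqReplace v w u (rA ++ [M]) = seqReplace v w u (rB ++ [N])) : False := by
  obtain ⟨hvB, hltB⟩ := valid_concat hB
  obtain ⟨hvA, hltA⟩ := valid_concat hA
  have hN0 : 0 ≤ N := (valid_mem hB N (by simp)).1
  have hNocc : occursAt v u N.toNat := (valid_mem hB N (by simp)).2
  -- the last replacement of the B-side chain puts a `w` at position `k`
  obtain ⟨k, hk, hkocc⟩ := image_seqReplace hresp hvB N.toNat hNocc
      (fun x hx => by have := hltB x hx; omega)
  have hkb := occ_bound hv hkocc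
  have hZeq : seqReplace v w u (rB ++ [N]) = replaceAt v w (seqReplace v w u rB) k := by
    rw [seqReplace_concat]
    congr 1
    generalize hg : (rB.length : ℤ) * ((w.length : ℤ) - (v.length : ℤ)) = c at hk ⊢
    omega
  have hwk : occursAt w (seqReplace v w u (rB ++ [N])) k := by
    rw [hZeq]
    exact replaceAt_occ_w (by omega)
  -- the image of the occurrence of `v` at `N` under the A-side chain
  obtain ⟨k₂, hk₂, hk₂occ⟩ := image_seqReplace hresp hA N.toNat hNocc
      (by
        intro x hx
        rcases List.mem_append.mp hx with hx | hx
        · have h1 := hltA x hx; omega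
        · have h1 : x = M := List.mem_singleton.mp hx; omega)
  have hk₂Z : occursAt v (seqReplace v w u (rB ++ [N])) k₂ := by rw [← hZ]; exact hk₂occ
  -- arithmetic : k₂ = k + (|w| - |v|)
  have e2 : k₂ = k + (w.length - v.length) := by
    rw [List.length_append, List.length_singleton, hlen] at hk₂
    push_cast at hk₂
    rw [add_mul, one_mul] at hk₂
    generalize hg : (rB.length : ℤ) * ((w.length : ℤ) - (v.length : ℤ)) = c at hk hk₂
    omega
  -- now read off that `v` is a suffix of `w`
  set Z := seqReplace v w u (rB ++ [N]) with hZdef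
  have hZk : Z.drop k = w ++ Z.drop (k + w.length) := by
    have h6 : (Z.drop k).take w.length = w := hwk
    conv_lhs => rw [← List.take_append_drop w.length (Z.drop k)]
    rw [h6, List.drop_drop]
  have hfin : v = w.drop (w.length - v.length) := by
    have h5 : (Z.drop k₂).take v.length = v := hk₂Z
    rw [e2, ← List.drop_drop, hZk,
      List.drop_append_of_le_length (by omega),
      List.take_left' (by rw [List.length_drop]; omega)] at h5
    exact h5.symm
  exact hsuf (hfin ▸ List.drop_suffix (w.length - v.length) w)

lemma main_inj (hv : v ≠ []) (hresp : Respects v w) (hsuf : ¬ v <:+ w) (hpre : ¬ w <+: v) :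
    ∀ (n : ℕ) (l₁ l₂ : List ℤ) (u : List A), Valid v w u l₁ → Valid v w u l₂ →
      l₁.length = n → l₂.length = n →
      seqReplace v w u l₁ = seqReplace v w u l₂ → l₁ = l₂ := by
  intro n
  induction n with
  | zero =>
    intro l₁ l₂ u _ _ h1 h2 _
    rw [List.length_eq_zero_iff.mp h1, List.length_eq_zero_iff.mp h2]
  | succ n ih =>
    intro l₁ l₂ u h₁ h₂ hl₁ hl₂ hZ
    obtain ⟨a, r₁, rfl⟩ : ∃ a r, l₁ = a :: r := by
      cases l₁ with
      | nil => simp at hl₁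
      | cons a r => exact ⟨a, r, rfl⟩
    obtain ⟨b, r₂, rfl⟩ : ∃ b r, l₂ = b :: r := by
      cases l₂ with
      | nil => simp at hl₂
      | cons b r => exact ⟨b, r, rfl⟩
    have key : ∀ (a b : ℤ) (r₁ r₂ : List ℤ), Valid v w u (a :: r₁) → Valid v w u (b :: r₂) →
        (a :: r₁).length = n + 1 → (b :: r₂).length = n + 1 → a < b →
        seqReplace v w u (a :: r₁) = seqReplace v w u (b :: r₂) → False := by
      clear hZ hl₁ hl₂ h₁ h₂ r₁ r₂ a b
      intro a b r₁ r₂ h₁ h₂ hl₁ hl₂ hab hZ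
      have hδ := head_lt hv hresp hpre h₁ h₂ hab hZ
      obtain ⟨rA, M, eA⟩ : ∃ rA M, a :: r₁ = rA ++ [M] :=
        ⟨(a :: r₁).dropLast, (a :: r₁).getLast (by simp),
          (List.dropLast_append_getLast (by simp)).symm⟩
      obtain ⟨rB, N, eB⟩ : ∃ rB N, b :: r₂ = rB ++ [N] :=
        ⟨(b :: r₂).dropLast, (b :: r₂).getLast (by simp),
          (List.dropLast_append_getLast (by simp)).symm⟩
      have hr₁ : r₁.length = n := by simpa using hl₁
      have hr₂ : r₂.length = n := by simpa using hl₂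
      have hlenA : rA.length = n := by
        have h := congrArg List.length eA
        simp at h
        omega
      have hlenB : rB.length = n := by
        have h := congrArg List.length eB
        simp at h
        omega
      rw [eA] at h₁ hZ
      rw [eB] at h₂ hZ
      rcases lt_trichotomy M N with hMN | rfl | hNM
      · exact last_lt_contra hv hresp hsuf hδ h₁ h₂ (by omega) hMN hZ
      · -- equal last entries : peel from the right
        obtain ⟨hvA, hltA⟩ := valid_concat h₁
        obtain ⟨hvB, hltB⟩ := valid_concat h₂
        have hM0 : 0 ≤ M := (valid_mem h₁ M (by simp)).1
        have hMocc : occursAt v u M.toNat := (valid_mem h₁ M (by simp)).2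
        obtain ⟨kA, hkA, hkAocc⟩ := image_seqReplace hresp hvA M.toNat hMocc
          (fun x hx => by have := hltA x hx; omega)
        obtain ⟨kB, hkB, hkBocc⟩ := image_seqReplace hresp hvB M.toNat hMocc
          (fun x hx => by have := hltB x hx; omega)
        have hkAB : kA = kB := by
          rw [hlenA] at hkA
          rw [hlenB] at hkB
          generalize hg : (n : ℤ) * ((w.length : ℤ) - (v.length : ℤ)) = c at hkA hkB
          omega
        have hZ' : replaceAt v w (seqReplace v w u rA) kA
            = replaceAt v w (seqReplace v w u rB) kB := by
          rw [seqReplace_concat, seqReplace_concat] at hZ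
          have eposA : (M + (rA.length : ℤ) * ((w.length : ℤ) - (v.length : ℤ))).toNat = kA := by
            rw [hlenA] at hkA
            rw [hlenA]
            generalize hg : (n : ℤ) * ((w.length : ℤ) - (v.length : ℤ)) = c at hkA ⊢
            omega
          have eposB : (M + (rB.length : ℤ) * ((w.length : ℤ) - (v.length : ℤ))).toNat = kB := by
            rw [hlenB] at hkB
            rw [hlenB]
            generalize hg : (n : ℤ) * ((w.length : ℤ) - (v.length : ℤ)) = c at hkB ⊢
            omega
          rw [eposA, eposB] at hZ
          exact hZ
        rw [hkAB] at hZ'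
        rw [hkAB] at hkAocc
        have hAB : seqReplace v w u rA = seqReplace v w u rB :=
          replaceAt_inj hv hkAocc hkBocc hZ'
        have hr : rA = rB := ih rA rB u hvA hvB hlenA hlenB hAB
        have : a :: r₁ = b :: r₂ := by rw [eA, eB, hr]
        simp at this
        omega
      · exact last_lt_contra hv hresp hsuf hδ h₂ h₁ (by omega) hNM hZ.symm
    rcases lt_trichotomy a b with hab | rfl | hba
    · exact (key a b r₁ r₂ h₁ h₂ hl₁ hl₂ hab hZ).elim
    · rw [seqReplace_cons, seqReplace_cons] at hZ
      cases h₁ with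
      | cons h0 hocc hlt hmem hvt₁ =>
        cases h₂ with
        | cons h0' hocc' hlt' hmem' hvt₂ =>
          have hmap := ih _ _ _ hvt₁ hvt₂ (by simpa using hl₁) (by simpa using hl₂) hZ
          have hinj : Function.Injective
              (fun x : ℤ => x + ((w.length : ℤ) - (v.length : ℤ))) := by
            intro x y h
            simpa using h
          have : r₁ = r₂ := List.map_injective_iff.mpr hinj hmap
          rw [this]
    · exact (key b a r₂ r₁ h₂ h₁ hl₂ hl₁ hba hZ.symm).elim

end Stmt8

/-- Lemma (injective): if `v` respects the transition to `w`, `v` is not a suffix of `w`,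
and `w` is not a prefix of `v`, then for any `u` and `m`, `S ↦ R_u^{v→w}(S)` is injective
on `m`-element subsets of `O_v(u)`. -/
theorem statement8 {A : Type*} [Fintype A] (v w : List A)
    (hresp : Respects v w) (hsuf : ¬ v <:+ w) (hpre : ¬ w <+: v)
    (u : List A) (m : ℕ) :
    Set.InjOn (replaceSet v w u) {S : Finset ℕ | ↑S ⊆ occSet v u ∧ S.card = m} := by
  have hv : v ≠ [] := by
    intro h
    exact hsuf (h ▸ List.nil_suffix)
  intro S hS T hT hST
  simp only [Set.mem_setOf_eq] at hS hT
  have hval : ∀ (X : Finset ℕ), ↑X ⊆ occSet v u →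
      Stmt8.Valid v w u ((X.sort (· ≤ ·)).map (fun k : ℕ => (k : ℤ))) := by
    intro X hX
    refine Stmt8.valid_of hresp ?_ ?_
    · refine List.Pairwise.map _ ?_ (Finset.sortedLT_sort X).pairwise
      intro a b hab
      exact_mod_cast hab
    · intro x hx
      obtain ⟨k, hk, rfl⟩ := List.mem_map.mp hx
      refine ⟨by positivity, ?_⟩
      have hkS : k ∈ X := (Finset.mem_sort _).mp hk
      have : k ∈ occSet v u := hX hkS
      simpa [occSet] using this
  have hlen : ∀ (X : Finset ℕ), X.card = m →
      ((X.sort (· ≤ ·)).map (fun k : ℕ => (k : ℤ))).length = m := by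
    intro X hX
    rw [List.length_map, Finset.length_sort, hX]
  have hmain := Stmt8.main_inj hv hresp hsuf hpre m
    ((S.sort (· ≤ ·)).map (fun k : ℕ => (k : ℤ)))
    ((T.sort (· ≤ ·)).map (fun k : ℕ => (k : ℤ))) u
    (hval S hS.1) (hval T hT.1) (hlen S hS.2) (hlen T hT.2) hST
  have hsort : S.sort (· ≤ ·) = T.sort (· ≤ ·) :=
    List.map_injective_iff.mpr (fun a b hab => by exact_mod_cast hab) hmain
  rw [← Finset.sort_toFinset S (· ≤ ·), ← Finset.sort_toFinset T (· ≤ ·), hsort]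
end

section
/- Let v, w be words over a finite alphabet A such that v respects the transition to w, v is not a suffix of w, and w is not a prefix of v. Then for every word u′ and every m ≤ |O_w(u′)|, the number of pairs (u, S) with S an m-element subset of O_v(u) and u′ = R_u^{v→w}(S) is at most the binomial coefficient C(|O_w(u′)|, m). -/
namespace Statement9Aux

variable {A : Type*}

lemma mem_occSet {v u : List A} {i : ℕ} : i ∈ occSet v u ↔ occursAt v u i := Iff.rfl

lemma occursAt_bound {v u : List A} {i : ℕ} (hv : v ≠ []) (h : occursAt v u i) :
    i + v.length ≤ u.length := by
  have h1 := congrArg List.length h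
  simp only [List.length_take, List.length_drop] at h1
  have h2 : v.length ≠ 0 := by simpa using hv
  omega

lemma occursAt_replaceAt_self {v w u : List A} {i : ℕ} (hi : i ≤ u.length) :
    occursAt w (replaceAt v w u i) i := by
  have hlt : (u.take i).length = i := by rw [List.length_take]; omega
  unfold occursAt replaceAt
  rw [List.append_assoc, List.drop_left' hlt, List.take_left' rfl]

lemma cancel {v w : List A} (hv : v ≠ []) {u : List A} {i : ℕ} (h : occursAt v u i) :
    replaceAt w v (replaceAt v w u i) i = u := by
  have hb := occursAt_bound hv h
  have hlt : (u.take i).length = i := by rw [List.length_take]; omega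
  unfold replaceAt
  have e1 : (u.take i ++ w ++ u.drop (i + v.length)).take i = u.take i := by
    rw [List.append_assoc]; exact List.take_left' hlt
  have e2 : (u.take i ++ w ++ u.drop (i + v.length)).drop (i + w.length) =
      u.drop (i + v.length) := List.drop_left' (by simp [hlt])
  rw [e1, e2]
  conv_rhs => rw [← List.take_append_drop i u]
  rw [List.append_assoc]
  congr 1
  rw [show u.drop (i + v.length) = (u.drop i).drop v.length from by rw [List.drop_drop]]
  nth_rewrite 1 [← h]
  exact List.take_append_drop _ _

/-- Positions in the final word of the inserted copies of `w`. -/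
def outPos (d : ℤ) : List ℤ → List ℤ
  | [] => []
  | s :: rest => s :: outPos d (rest.map (· + d))
  termination_by l => l.length
  decreasing_by simp

lemma outPos_nil (d : ℤ) : outPos d [] = [] := by rw [outPos]

lemma outPos_cons (d : ℤ) (s : ℤ) (rest : List ℤ) :
    outPos d (s :: rest) = s :: outPos d (rest.map (· + d)) := by rw [outPos]

lemma outPos_length (d : ℤ) : ∀ (n : ℕ) (L : List ℤ), L.length = n →
    (outPos d L).length = n := by
  intro n
  induction n with
  | zero => intro L hL; rw [List.length_eq_zero_iff] at hL; subst hL; simp [outPos_nil]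
  | succ n ih =>
    intro L hL
    cases L with
    | nil => simp at hL
    | cons s rest =>
      simp only [List.length_cons] at hL
      rw [outPos_cons, List.length_cons, ih (rest.map (· + d)) (by simpa using hL)]

lemma outPos_inj (d : ℤ) : ∀ (n : ℕ) (L₁ L₂ : List ℤ), L₁.length = n → L₂.length = n →
    outPos d L₁ = outPos d L₂ → L₁ = L₂ := by
  intro n
  induction n with
  | zero =>
    intro L₁ L₂ h₁ h₂ _
    rw [List.length_eq_zero_iff] at h₁ h₂; rw [h₁, h₂]
  | succ n ih =>
    intro L₁ L₂ h₁ h₂ heq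
    cases L₁ with
    | nil => simp at h₁
    | cons s₁ r₁ =>
      cases L₂ with
      | nil => simp at h₂
      | cons s₂ r₂ =>
        rw [outPos_cons, outPos_cons] at heq
        simp only [List.cons.injEq] at heq
        obtain ⟨hs, ht⟩ := heq
        simp only [List.length_cons] at h₁ h₂
        have hmap : r₁.map (· + d) = r₂.map (· + d) :=
          ih _ _ (by simpa using h₁) (by simpa using h₂) ht
        have hinj : Function.Injective (fun x : ℤ => x + d) := fun a b h => by
          simpa using h
        rw [hs, List.map_injective_iff.mpr hinj hmap]

lemma map_toNat_cast : ∀ (l : List ℤ), (∀ x ∈ l, 0 ≤ x) →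
    (l.map Int.toNat).map (fun k : ℕ => (k : ℤ)) = l := by
  intro l hl
  induction l with
  | nil => simp
  | cons a l ih =>
    simp only [List.map_cons, List.cons.injEq]
    refine ⟨Int.toNat_of_nonneg (hl a (by simp)), ih (fun x hx => hl x (by simp [hx]))⟩

lemma seqReplace_nil (v w : List A) (u : List A) : seqReplace v w u [] = u := by
  rw [seqReplace]

lemma seqReplace_cons (v w : List A) (u : List A) (s : ℤ) (rest : List ℤ) :
    seqReplace v w u (s :: rest) =
      seqReplace v w (replaceAt v w u s.toNat)
        (rest.map (· + ((w.length : ℤ) - (v.length : ℤ)))) := by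
  rw [seqReplace]

/-- Inverse operation: undo the replacements from right to left. -/
def unrep (v w : List A) (u' : List A) : List ℤ → List A
  | [] => u'
  | t :: ts => replaceAt w v (unrep v w u' ts) t.toNat

lemma main (v w : List A) (hresp : Respects v w) (hv : v ≠ []) :
    ∀ (n : ℕ) (L : List ℤ) (u : List A), L.length = n →
    L.Pairwise (· < ·) →
    (∀ s ∈ L, ∃ k : ℕ, (k : ℤ) = s ∧ occursAt v u k) →
    (∀ q : ℕ, (∀ s ∈ L, (q : ℤ) < s) → occursAt w u q →
        occursAt w (seqReplace v w u L) q) ∧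
    (∀ t ∈ outPos ((w.length : ℤ) - (v.length : ℤ)) L,
        ∃ k : ℕ, (k : ℤ) = t ∧ occursAt w (seqReplace v w u L) k) ∧
    (∀ c : ℤ, (∀ s ∈ L, c < s) →
        ∀ t ∈ outPos ((w.length : ℤ) - (v.length : ℤ)) L, c < t) ∧
    (outPos ((w.length : ℤ) - (v.length : ℤ)) L).Pairwise (· < ·) ∧
    unrep v w (seqReplace v w u L) (outPos ((w.length : ℤ) - (v.length : ℤ)) L) = u := by
  intro n
  induction n with
  | zero =>
    intro L u hL _ _
    rw [List.length_eq_zero_iff] at hL; subst hL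
    simp [seqReplace_nil, outPos_nil, unrep]
  | succ n ih =>
    intro L u hL hsort hocc
    cases L with
    | nil => simp at hL
    | cons s rest =>
      obtain ⟨k, hk, hkocc⟩ := hocc s (List.mem_cons_self)
      have hs : s.toNat = k := by omega
      have hkle : k + v.length ≤ u.length := occursAt_bound hv hkocc
      obtain ⟨h1, h2, h3, h4⟩ := hresp u k hkocc
      have hseq : seqReplace v w u (s :: rest) =
          seqReplace v w (replaceAt v w u k)
            (rest.map (· + ((w.length : ℤ) - (v.length : ℤ)))) := by
        rw [seqReplace_cons, hs]
      have houtp : outPos ((w.length : ℤ) - (v.length : ℤ)) (s :: rest) =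
          s :: outPos ((w.length : ℤ) - (v.length : ℤ))
            (rest.map (· + ((w.length : ℤ) - (v.length : ℤ)))) := outPos_cons _ _ _
      rw [List.pairwise_cons] at hsort
      have hrest : ∀ j ∈ rest, ∃ kj : ℕ, (kj : ℤ) = j ∧ occursAt v u kj ∧ k < kj := by
        intro j hj
        obtain ⟨kj, hkj, hkjocc⟩ := hocc j (List.mem_cons_of_mem _ hj)
        refine ⟨kj, hkj, hkjocc, ?_⟩
        have := hsort.1 j hj
        omega
      have hL₂occ : ∀ s' ∈ rest.map (· + ((w.length : ℤ) - (v.length : ℤ))),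
          ∃ k' : ℕ, (k' : ℤ) = s' ∧ occursAt v (replaceAt v w u k) k' := by
        intro s' hs'
        simp only [List.mem_map] at hs'
        obtain ⟨j, hj, rfl⟩ := hs'
        obtain ⟨kj, hkj, hkjocc, hkkj⟩ := hrest j hj
        obtain ⟨k', hk', hk'occ⟩ := h1 kj hkjocc hkkj
        exact ⟨k', by omega, hk'occ⟩
      have hklt : ∀ s' ∈ rest.map (· + ((w.length : ℤ) - (v.length : ℤ))), (k : ℤ) < s' := by
        intro s' hs'
        simp only [List.mem_map] at hs'
        obtain ⟨j, hj, rfl⟩ := hs'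
        obtain ⟨kj, hkj, hkjocc, hkkj⟩ := hrest j hj
        have := h4 kj hkjocc hkkj
        omega
      have hL₂sort : (rest.map (· + ((w.length : ℤ) - (v.length : ℤ)))).Pairwise (· < ·) :=
        List.pairwise_map.mpr (hsort.2.imp (fun h => by omega))
      simp only [List.length_cons] at hL
      obtain ⟨ih1, ih2, ih3, ih4, ih5⟩ :=
        ih (rest.map (· + ((w.length : ℤ) - (v.length : ℤ)))) (replaceAt v w u k)
          (by simpa using hL) hL₂sort hL₂occ
      refine ⟨?_, ?_, ?_, ?_, ?_⟩
      · intro q hq hqocc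
        have hqs : (q : ℤ) < s := hq s (List.mem_cons_self)
        have hqk : q < k := by omega
        rw [hseq]
        exact ih1 q (fun s' hs' => lt_trans (by omega : (q : ℤ) < (k : ℤ)) (hklt s' hs'))
          (h3 q hqocc hqk)
      · rw [hseq, houtp]
        intro t ht
        rcases List.mem_cons.mp ht with rfl | ht
        · exact ⟨k, hk, ih1 k hklt (occursAt_replaceAt_self (by omega))⟩
        · exact ih2 t ht
      · intro c hc t ht
        rw [houtp] at ht
        rcases List.mem_cons.mp ht with rfl | ht
        · exact hc t (List.mem_cons_self)
        · refine ih3 c (fun s' hs' => ?_) t ht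
          have h5 := hc s (List.mem_cons_self)
          have h6 := hklt s' hs'
          omega
      · rw [houtp, List.pairwise_cons]
        refine ⟨fun b hb => ?_, ih4⟩
        refine ih3 s (fun s' hs' => ?_) b hb
        have := hklt s' hs'
        omega
      · rw [hseq, houtp]
        show replaceAt w v (unrep v w _ _) s.toNat = u
        rw [ih5, hs]
        exact cancel hv hkocc

end Statement9Aux


/-- Lemma (preimage): if `v` respects the transition to `w`, `v` is not a suffix of `w`,
and `w` is not a prefix of `v`, then for any `u'` and `m ≤ |O_w(u')|`, the number of pairs
`(u, S)` with `S ⊆ O_v(u)`, `|S| = m`, and `u' = R_u^{v→w}(S)` is at most `C(|O_w(u')|, m)`. -/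
theorem statement9 {A : Type*} [Fintype A] (v w : List A)
    (hresp : Respects v w) (hsuf : ¬ v <:+ w) (hpre : ¬ w <+: v)
    (u' : List A) (m : ℕ) (hm : m ≤ (occSet w u').ncard) :
    {p : List A × Finset ℕ | ↑p.2 ⊆ occSet v p.1 ∧ p.2.card = m ∧
        replaceSet v w p.1 p.2 = u'}.ncard ≤ Nat.choose (occSet w u').ncard m := by
  classical
  have hv : v ≠ [] := by rintro rfl; exact hsuf List.nil_suffix
  have hw : w ≠ [] := by rintro rfl; exact hpre List.nil_prefix
  have hw1 : w.length ≠ 0 := by simpa using hw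
  have hfin : (occSet w u').Finite := by
    apply Set.Finite.subset (Set.finite_Iio u'.length)
    intro i hi
    have := Statement9Aux.occursAt_bound hw hi
    simp only [Set.mem_Iio]
    omega
  set P : Set (List A × Finset ℕ) := {p : List A × Finset ℕ | ↑p.2 ⊆ occSet v p.1 ∧
      p.2.card = m ∧ replaceSet v w p.1 p.2 = u'} with hP
  set Lf : List A × Finset ℕ → List ℤ :=
    fun p => (p.2.sort (· ≤ ·)).map (fun k : ℕ => (k : ℤ)) with hLf
  set f : List A × Finset ℕ → Finset ℕ :=
    fun p => ((Statement9Aux.outPos ((w.length : ℤ) - (v.length : ℤ)) (Lf p)).map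
      Int.toNat).toFinset with hf
  have key : ∀ p : List A × Finset ℕ, p ∈ P →
      (∀ t ∈ Statement9Aux.outPos ((w.length : ℤ) - (v.length : ℤ)) (Lf p),
          ∃ k : ℕ, (k : ℤ) = t ∧ occursAt w u' k) ∧
      (Statement9Aux.outPos ((w.length : ℤ) - (v.length : ℤ)) (Lf p)).Pairwise (· < ·) ∧
      Statement9Aux.unrep v w u'
        (Statement9Aux.outPos ((w.length : ℤ) - (v.length : ℤ)) (Lf p)) = p.1 := by
    intro p hp
    obtain ⟨hsub, hcard, hrep⟩ := hp
    have hsorted : (Lf p).Pairwise (· < ·) :=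
      List.pairwise_map.mpr ((Finset.sortedLT_sort p.2).pairwise.imp (fun h => by exact_mod_cast h))
    have hocc : ∀ s ∈ Lf p, ∃ k : ℕ, (k : ℤ) = s ∧ occursAt v p.1 k := by
      intro s hs
      simp only [hLf, List.mem_map] at hs
      obtain ⟨k, hk, rfl⟩ := hs
      exact ⟨k, rfl, hsub ((Finset.mem_sort _).mp hk)⟩
    obtain ⟨c1, c2, c3, c4, c5⟩ :=
      Statement9Aux.main v w hresp hv (Lf p).length (Lf p) p.1 rfl hsorted hocc
    have hrep' : seqReplace v w p.1 (Lf p) = u' := hrep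
    rw [hrep'] at c2 c5
    exact ⟨c2, c4, c5⟩
  have hlenLf : ∀ p : List A × Finset ℕ, p ∈ P → (Lf p).length = m := by
    intro p hp
    simp only [hLf, List.length_map, Finset.length_sort]
    exact hp.2.1
  have hnodup : ∀ p ∈ P,
      ((Statement9Aux.outPos ((w.length : ℤ) - (v.length : ℤ)) (Lf p)).map Int.toNat).Nodup := by
    intro p hp
    have hnd : (Statement9Aux.outPos ((w.length : ℤ) - (v.length : ℤ)) (Lf p)).Nodup :=
      (key p hp).2.1.nodup
    refine hnd.map_on ?_
    intro x hx y hy hxy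
    obtain ⟨kx, hkx, -⟩ := (key p hp).1 x hx
    obtain ⟨ky, hky, -⟩ := (key p hp).1 y hy
    omega
  have hcast : ∀ p ∈ P,
      ((Statement9Aux.outPos ((w.length : ℤ) - (v.length : ℤ)) (Lf p)).map Int.toNat).map
        (fun k : ℕ => (k : ℤ)) =
      Statement9Aux.outPos ((w.length : ℤ) - (v.length : ℤ)) (Lf p) := by
    intro p hp
    apply Statement9Aux.map_toNat_cast
    intro x hx
    obtain ⟨kx, hkx, -⟩ := (key p hp).1 x hx
    omega
  have hsub2 : f '' P ⊆ ↑(hfin.toFinset.powersetCard m) := by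
    rintro q ⟨p, hp, rfl⟩
    rw [Finset.mem_coe, Finset.mem_powersetCard]
    constructor
    · intro x hx
      rw [Set.Finite.mem_toFinset]
      simp only [hf, List.mem_toFinset, List.mem_map] at hx
      obtain ⟨t, ht, rfl⟩ := hx
      obtain ⟨k, hk, hkocc⟩ := (key p hp).1 t ht
      have hkt : t.toNat = k := by omega
      rw [hkt]
      exact hkocc
    · show ((Statement9Aux.outPos _ (Lf p)).map Int.toNat).toFinset.card = m
      rw [List.toFinset_card_of_nodup (hnodup p hp), List.length_map,
        Statement9Aux.outPos_length _ (Lf p).length _ rfl, hlenLf p hp]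
  have hinj : Set.InjOn f P := by
    intro p₁ h₁ p₂ h₂ hfe
    have hperm := List.perm_of_nodup_nodup_toFinset_eq (hnodup p₁ h₁) (hnodup p₂ h₂) hfe
    have hpermZ : (Statement9Aux.outPos ((w.length : ℤ) - (v.length : ℤ)) (Lf p₁)).Perm
        (Statement9Aux.outPos ((w.length : ℤ) - (v.length : ℤ)) (Lf p₂)) := by
      rw [← hcast p₁ h₁, ← hcast p₂ h₂]
      exact hperm.map _
    haveI : IsAntisymm ℤ (· < ·) := ⟨fun a b hab hba => absurd hba (asymm hab)⟩
    have heq := List.Perm.eq_of_pairwise (fun a b _ _ hab hba => absurd hba (asymm hab)) (key p₁ h₁).2.1 (key p₂ h₂).2.1 hpermZ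
    have hlen2 : (Lf p₂).length = (Lf p₁).length := by
      rw [hlenLf p₁ h₁, hlenLf p₂ h₂]
    have hLeq : Lf p₁ = Lf p₂ :=
      Statement9Aux.outPos_inj _ (Lf p₁).length _ _ rfl hlen2 heq
    have hSeq : p₁.2 = p₂.2 := by
      have hsorteq : p₁.2.sort (· ≤ ·) = p₂.2.sort (· ≤ ·) :=
        List.map_injective_iff.mpr Nat.cast_injective hLeq
      have := congrArg List.toFinset hsorteq
      rwa [Finset.sort_toFinset, Finset.sort_toFinset] at this
    have hueq : p₁.1 = p₂.1 := by
      have e1 := (key p₁ h₁).2.2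
      have e2 := (key p₂ h₂).2.2
      rw [heq] at e1
      exact e1.symm.trans e2
    exact Prod.ext hueq hSeq
  calc P.ncard = (f '' P).ncard := (Set.ncard_image_of_injOn hinj).symm
    _ ≤ (↑(hfin.toFinset.powersetCard m) : Set (Finset ℕ)).ncard :=
        Set.ncard_le_ncard hsub2 (Finset.finite_toSet _)
    _ = (hfin.toFinset.powersetCard m).card := Set.ncard_coe_finset _
    _ = (hfin.toFinset.card).choose m := Finset.card_powersetCard _ _
    _ = (occSet w u').ncard.choose m := by rw [← Set.ncard_eq_toFinset_card _ hfin]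
end

section
/- Let S ⊆ ℕ ∪ {0} with gcd(S+1) = 1 and let λ = e^{h_top(X_S)}. Then Σ_{n ∈ S} λ^{−n−1} = 1; that is, h_top(X_S) = log λ where λ is the unique solution of 1 = Σ_{n ∈ S} λ^{−n−1}. -/
open MeasureTheory Filter Real Topology

/-- The shift map on `A^ℤ`: `(σ x) i = x (i+1)`. -/
def shiftMap (A : Type*) : (ℤ → A) → (ℤ → A) := fun x i => x (i + 1)

/-- A subshift: a nonempty, closed, shift-invariant subset of `A^ℤ`. -/
def IsSubshift {A : Type*} [TopologicalSpace A] (X : Set (ℤ → A)) : Prop :=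
  X.Nonempty ∧ IsClosed X ∧ shiftMap A '' X = X

/-- Cylinder set of a word given as a list (placed on `[0, |u|)`). -/
def cylinderL {A : Type*} (X : Set (ℤ → A)) (u : List A) : Set (ℤ → A) :=
  {x ∈ X | ∀ i : Fin u.length, x ((i : ℕ) : ℤ) = u.get i}

/-- The language of `X`: all nonempty words appearing in points of `X`. -/
def langL {A : Type*} (X : Set (ℤ → A)) : Set (List A) :=
  {u | u ≠ [] ∧ (cylinderL X u).Nonempty}

/-- The set of words of length `n` appearing in points of `X`. -/
def langF {A : Type*} (X : Set (ℤ → A)) (n : ℕ) : Set (Fin n → A) :=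
  {w | ({x ∈ X | ∀ i : Fin n, x ((i : ℕ) : ℤ) = w i} : Set (ℤ → A)).Nonempty}

/-- The partial entropy sum `∑_{w ∈ A^n} -μ(w) log μ(w)`. -/
noncomputable def entropySumF {A : Type*} [Fintype A] [MeasurableSpace A]
    (X : Set (ℤ → A)) (μ : Measure (ℤ → A)) (n : ℕ) : ℝ :=
  ∑ w : Fin n → A,
    -((μ {x ∈ X | ∀ i : Fin n, x ((i : ℕ) : ℤ) = w i}).toReal *
      Real.log (μ {x ∈ X | ∀ i : Fin n, x ((i : ℕ) : ℤ) = w i}).toReal)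

/-- The extender set of a word `u`, as a set of pairs (left-infinite tail,
right-infinite tail); the left tail records `x (-1), x (-2), …` and the right tail
records `x |u|, x (|u|+1), …`. -/
def extenderL {A : Type*} (X : Set (ℤ → A)) (u : List A) : Set ((ℕ → A) × (ℕ → A)) :=
  {p | ∃ x ∈ cylinderL X u, (∀ i : ℕ, p.1 i = x (-(i : ℤ) - 1)) ∧
    (∀ i : ℕ, p.2 i = x ((u.length : ℤ) + (i : ℤ)))}

/-- The `S`-gap subshift on `{0,1}`: the number of `0`s between any two consecutive
`1`s lies in `S`. -/
def Xgap (S : Set ℕ) : Set (ℤ → Fin 2) :=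
  {x | ∀ i j : ℤ, i < j → x i = 1 → x j = 1 → (∀ k : ℤ, i < k → k < j → x k = 0) →
    (j - i - 1).toNat ∈ S}

namespace SGapAux


lemma fin2ne (v : Fin 2) (h : ¬ v = 1) : v = 0 := by
  revert h; revert v; decide

/-- Good words: internal gaps between consecutive 1s lie in S. -/
def Good (S : Set ℕ) (n : ℕ) (u : Fin n → Fin 2) : Prop :=
  ∀ i j : Fin n, (i : ℕ) < j → u i = 1 → u j = 1 →
    (∀ k : Fin n, (i : ℕ) < k → (k : ℕ) < j → u k = 0) → ((j : ℕ) - i - 1) ∈ S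

/-- Extension of a word by zeros to a bi-infinite sequence. -/
def extZ (n : ℕ) (u : Fin n → Fin 2) : ℤ → Fin 2 :=
  fun i => if h : 0 ≤ i ∧ i < n then u ⟨i.toNat, by omega⟩ else 0

lemma langF_eq (S : Set ℕ) (n : ℕ) :
    langF (Xgap S) n = {u : Fin n → Fin 2 | Good S n u} := by
  ext u
  constructor
  · rintro ⟨x, ⟨hx, hm⟩⟩ i j hij hui huj hz
    have key := hx (i : ℤ) (j : ℤ) (by exact_mod_cast hij)
      (by rw [hm i]; exact hui) (by rw [hm j]; exact huj)
      (by
        intro k hk1 hk2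
        have hk0 : 0 ≤ k := le_trans (Int.ofNat_nonneg i.1) (le_of_lt hk1)
        have hkn : k.toNat < n := by
          have : (k : ℤ) < (j : ℕ) := hk2
          omega
        have h2 := hm ⟨k.toNat, hkn⟩
        rw [show (((⟨k.toNat, hkn⟩ : Fin n) : ℕ) : ℤ) = k by simp; omega] at h2
        rw [h2]
        exact hz ⟨k.toNat, hkn⟩ (by change (i : ℕ) < k.toNat; omega)
          (by change k.toNat < (j : ℕ); omega))
    have : ((j : ℤ) - (i : ℤ) - 1).toNat = (j : ℕ) - (i : ℕ) - 1 := by omega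
    rwa [this] at key
  · intro hu
    refine ⟨extZ n u, ?_, ?_⟩
    · intro i j hij hxi hxj hz
      simp only [extZ] at hxi hxj
      by_cases hi : 0 ≤ i ∧ i < n
      · by_cases hj : 0 ≤ j ∧ j < n
        · rw [dif_pos hi] at hxi
          rw [dif_pos hj] at hxj
          have key := hu ⟨i.toNat, by omega⟩ ⟨j.toNat, by omega⟩
            (by change i.toNat < j.toNat; omega) hxi hxj
            (by
              intro k hk1 hk2
              have h1 : i < ((k : ℕ) : ℤ) := by
                have : (i.toNat : ℤ) < ((k : ℕ) : ℤ) := by exact_mod_cast hk1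
                omega
              have h2 : ((k : ℕ) : ℤ) < j := by
                have : ((k : ℕ) : ℤ) < (j.toNat : ℤ) := by exact_mod_cast hk2
                omega
              have := hz ((k : ℕ) : ℤ) h1 h2
              simp only [extZ] at this
              rw [dif_pos ⟨by positivity, by exact_mod_cast k.2⟩] at this
              convert this using 2; ext; simp)
          have : (j - i - 1).toNat = j.toNat - i.toNat - 1 := by omega
          rw [this]; exact key
        · rw [dif_neg hj] at hxj; exact absurd hxj (by decide)
      · rw [dif_neg hi] at hxi; exact absurd hxi (by decide)
    · intro i
      simp only [extZ]
      rw [dif_pos ⟨by positivity, by exact_mod_cast i.2⟩]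
      congr 1



/-- Good words ending in 1. -/
def ELast (S : Set ℕ) (n : ℕ) : Set (Fin n → Fin 2) :=
  {u | Good S n u ∧ ∃ i : Fin n, (i : ℕ) + 1 = n ∧ u i = 1}

noncomputable def GF (S : Set ℕ) (n : ℕ) : Finset (Fin n → Fin 2) :=
  Set.Finite.toFinset (Set.toFinite {u | Good S n u})

noncomputable def LF (S : Set ℕ) (n : ℕ) : Finset (Fin n → Fin 2) :=
  Set.Finite.toFinset (Set.toFinite (ELast S n))

lemma mem_GF {S n u} : u ∈ GF S n ↔ Good S n u := by simp [GF]
lemma mem_LF {S n u} : u ∈ LF S n ↔ u ∈ ELast S n := by simp [LF]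

/-- append `0^s 1` viewed with explicit target length. -/
def extw (n m s : ℕ) (u : Fin m → Fin 2) : Fin n → Fin 2 :=
  fun i => if h : (i : ℕ) < m then u ⟨i, h⟩ else if (i : ℕ) = m + s then 1 else 0

/-- pad with zeros. -/
def zeroExt (n m : ℕ) (u : Fin m → Fin 2) : Fin n → Fin 2 :=
  fun i => if h : (i : ℕ) < m then u ⟨i, h⟩ else 0

lemma good_restrict (S : Set ℕ) {m n : ℕ} (h : m ≤ n) (u : Fin n → Fin 2)
    (hu : Good S n u) : Good S m (fun i : Fin m => u ⟨i, lt_of_lt_of_le i.2 h⟩) := by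
  intro i j hij h1 h2 hz
  have := hu ⟨i, by omega⟩ ⟨j, by omega⟩ hij h1 h2 (by
    intro k hk1 hk2
    have hkm : (k : ℕ) < m := lt_trans (by exact_mod_cast hk2) j.2
    exact hz ⟨k, hkm⟩ hk1 hk2)
  exact this

lemma ELast_last {S n} {u : Fin n → Fin 2} (hu : u ∈ ELast S n) (h1 : 1 ≤ n) :
    u ⟨n - 1, by omega⟩ = 1 := by
  obtain ⟨-, i, hi, h⟩ := hu
  have : i = (⟨n - 1, by omega⟩ : Fin n) := by ext; simp; omega
  rwa [this] at h

lemma ELast_pos {S n} {u : Fin n → Fin 2} (hu : u ∈ ELast S n) : 1 ≤ n := by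
  obtain ⟨-, i, hi, -⟩ := hu
  omega

/-- E1: appending a block `0^s 1` with `s ∈ S` preserves `ELast`. -/
lemma extw_mem (S : Set ℕ) {n m s : ℕ} (hn : n = m + s + 1) (hs : s ∈ S)
    {u : Fin m → Fin 2} (hu : u ∈ ELast S m) : extw n m s u ∈ ELast S n := by
  have hm1 : 1 ≤ m := ELast_pos hu
  have hlast : u ⟨m - 1, by omega⟩ = 1 := ELast_last hu hm1
  have hgood := hu.1
  constructor
  · intro i j hij h1 h2 hz
    simp only [extw] at h1 h2
    by_cases hjm : (j : ℕ) < m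
    · -- both inside u
      rw [dif_pos hjm] at h2
      have him : (i : ℕ) < m := lt_trans hij hjm
      rw [dif_pos him] at h1
      exact hgood ⟨i, him⟩ ⟨j, hjm⟩ hij h1 h2 (by
        intro k hk1 hk2
        have hkn : (k : ℕ) < n := by omega
        have := hz ⟨k, hkn⟩ hk1 hk2
        simp only [extw] at this
        rwa [dif_pos (show ((⟨(k : ℕ), hkn⟩ : Fin n) : ℕ) < m by change (k:ℕ) < m; omega)]
          at this)
    · rw [dif_neg hjm] at h2
      by_cases hje : (j : ℕ) = m + s
      · -- j is the new 1
        by_cases him : (i : ℕ) < m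
        · rw [dif_pos him] at h1
          -- claim i = m - 1
          have hieq : (i : ℕ) = m - 1 := by
            by_contra hne
            have hlt : (i : ℕ) < m - 1 := by omega
            have := hz ⟨m - 1, by omega⟩ (by change (i:ℕ) < m - 1; omega)
              (by change m - 1 < (j : ℕ); omega)
            simp only [extw] at this
            rw [dif_pos (show ((⟨m - 1, by omega⟩ : Fin n) : ℕ) < m by
              change m - 1 < m; omega)] at this
            have : u ⟨m - 1, by omega⟩ = 0 := by
              convert this using 2
            rw [hlast] at this
            exact absurd this (by decide)
          rw [show (j : ℕ) - (i : ℕ) - 1 = s by omega]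
          exact hs
        · rw [dif_neg him] at h1
          rw [if_neg (by omega)] at h1
          exact absurd h1 (by decide)
      · rw [if_neg hje] at h2
        exact absurd h2 (by decide)
  · refine ⟨⟨m + s, by omega⟩, by simp; omega, ?_⟩
    simp only [extw]
    rw [dif_neg (by change ¬ (m + s < m); omega)]
    simp

/-- E2: `extw` is injective for fixed `m, s`. -/
lemma extw_inj (n m s : ℕ) (hn : n = m + s + 1) :
    Function.Injective (extw (n := n) m s) := by
  intro u v huv
  funext i
  have := congrFun huv ⟨(i : ℕ), by omega⟩
  simp only [extw, Fin.val_mk, dif_pos i.2, Fin.eta] at this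
  exact this



set_option maxHeartbeats 1000000 in
/-- E3: images for different `s` are disjoint. -/
lemma extw_disj (S : Set ℕ) {n m m' s s' : ℕ} (hn : n = m + s + 1) (hn' : n = m' + s' + 1)
    (hss : s < s') {u : Fin m → Fin 2} {u' : Fin m' → Fin 2}
    (hu : u ∈ ELast S m) (hu' : u' ∈ ELast S m')
    (heq : extw n m s u = extw n m' s' u') : False := by
  have hm1 : 1 ≤ m := ELast_pos hu
  have hlast : u ⟨m - 1, by omega⟩ = 1 := ELast_last hu hm1
  have hkey := congrFun heq ⟨m - 1, by omega⟩
  simp only [extw, Fin.val_mk] at hkey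
  have c1 : m - 1 < m := by omega
  have c2 : ¬ (m - 1 < m') := by omega
  have c3 : ¬ (m - 1 = m' + s') := by omega
  rw [dif_pos c1, dif_neg c2, if_neg c3] at hkey
  have : (0 : Fin 2) = 1 := hkey.symm.trans (show u ⟨m - 1, c1⟩ = 1 from hlast)
  exact absurd this (by decide)

/-- C1: lower recursion. -/
lemma sum_le_LF (S : Set ℕ) (T : Finset ℕ) (hT : ↑T ⊆ S) (n : ℕ) :
    ∑ s ∈ T.filter (fun s => s + 2 ≤ n), (LF S (n - s - 1)).card ≤ (LF S n).card := by
  classical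
  set T' := T.filter (fun s => s + 2 ≤ n) with hT'
  have hmem : ∀ s ∈ T', s ∈ S ∧ s + 2 ≤ n := by
    intro s hs
    rw [hT', Finset.mem_filter] at hs
    exact ⟨hT hs.1, hs.2⟩
  set f : ℕ → Finset (Fin n → Fin 2) := fun s => (LF S (n - s - 1)).image (extw n (n - s - 1) s)
    with hf
  have hsub : T'.biUnion f ⊆ LF S n := by
    intro u hu
    rw [Finset.mem_biUnion] at hu
    obtain ⟨s, hs, hus⟩ := hu
    rw [hf, Finset.mem_image] at hus
    obtain ⟨v, hv, rfl⟩ := hus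
    obtain ⟨h1, h2⟩ := hmem s hs
    exact mem_LF.2 (extw_mem S (by omega) h1 (mem_LF.1 hv))
  have hdisj : ∀ x ∈ T', ∀ y ∈ T', x ≠ y → Disjoint (f x) (f y) := by
    intro x hx y hy hxy
    rw [Finset.disjoint_left]
    intro w hwx hwy
    rw [hf, Finset.mem_image] at hwx hwy
    obtain ⟨v, hv, hveq⟩ := hwx
    obtain ⟨v', hv', hveq'⟩ := hwy
    obtain ⟨-, hx2⟩ := hmem x hx
    obtain ⟨-, hy2⟩ := hmem y hy
    rcases lt_or_gt_of_ne hxy with hlt | hlt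
    · exact extw_disj S (by omega) (by omega) hlt (mem_LF.1 hv) (mem_LF.1 hv')
        (hveq.trans hveq'.symm)
    · exact extw_disj S (by omega) (by omega) hlt (mem_LF.1 hv') (mem_LF.1 hv)
        (hveq'.trans hveq.symm)
  calc ∑ s ∈ T', (LF S (n - s - 1)).card
      = ∑ s ∈ T', (f s).card := by
        refine Finset.sum_congr rfl (fun s hs => ?_)
        obtain ⟨-, hs2⟩ := hmem s hs
        rw [hf]
        exact (Finset.card_image_of_injective _ (extw_inj n (n - s - 1) s (by omega))).symm
    _ = (T'.biUnion f).card := (Finset.card_biUnion hdisj).symm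
    _ ≤ (LF S n).card := Finset.card_le_card hsub





/-- `{s ∈ S | s < n}` as a Finset, avoiding decidability of `S`. -/
noncomputable def Sfil (S : Set ℕ) (n : ℕ) : Finset ℕ :=
  Set.Finite.toFinset (Set.Finite.subset (Set.finite_Iio n) (fun s hs => hs.1 : {s | s < n ∧ s ∈ S} ⊆ Set.Iio n))

lemma mem_Sfil {S n s} : s ∈ Sfil S n ↔ s < n ∧ s ∈ S := by simp [Sfil]

/-- the word `0^(n-1) 1`. -/
def singleW (n : ℕ) : Fin n → Fin 2 := fun i => if (i : ℕ) + 1 = n then 1 else 0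

/-- C2: upper recursion for words ending in 1. -/
lemma LF_le (S : Set ℕ) (n : ℕ) :
    (LF S n).card ≤ 1 + ∑ s ∈ Sfil S (n - 1), (LF S (n - s - 1)).card := by
  classical
  have hsub : LF S n ⊆ insert (singleW n)
      ((Sfil S (n - 1)).biUnion (fun s => (LF S (n - s - 1)).image (extw n (n - s - 1) s))) := by
    intro u hu
    obtain ⟨hg, i₁, hi₁, hu₁⟩ := mem_LF.1 hu
    have hn1 : 1 ≤ n := by omega
    have hlast : u ⟨n - 1, by omega⟩ = 1 := by
      have : i₁ = (⟨n - 1, by omega⟩ : Fin n) := by ext; simp; omega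
      rwa [this] at hu₁
    set uv : ℕ → Fin 2 := fun j => if h : j < n then u ⟨j, h⟩ else 0 with huv
    by_cases hex : ∃ j, j + 1 < n ∧ uv j = 1
    · -- there is another 1 before the last one
      obtain ⟨j₁, hj₁, hj₁1⟩ := hex
      set Q : ℕ → Prop := fun j => j + 1 < n ∧ uv j = 1 with hQ
      set j₀ := Nat.findGreatest Q n with hj₀
      have hspec : Q j₀ := Nat.findGreatest_spec (m := j₁) (by omega) ⟨hj₁, hj₁1⟩
      have hgr : ∀ k, j₀ < k → k + 1 < n → uv k = 0 := by
        intro k h1 h2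
        have hng := Nat.findGreatest_is_greatest (n := n) (P := Q) h1 (by omega)
        exact fin2ne _ (fun hc => hng ⟨h2, hc⟩)
      obtain ⟨hj₀n, hj₀1⟩ := hspec
      have hn2 : 2 ≤ n := by omega
      have hj₀n2 : j₀ + 1 < n := hj₀n
      have hj₀u : u ⟨j₀, by omega⟩ = 1 := by
        rw [huv] at hj₀1
        simp only [dif_pos (show j₀ < n by omega)] at hj₀1
        exact hj₀1
      set s := n - 2 - j₀ with hs
      set m := n - s - 1 with hm
      have hmj : m = j₀ + 1 := by omega
      have hnm : n = m + s + 1 := by omega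
      -- gap s is in S
      have hsS : s ∈ S := by
        have := hg ⟨j₀, by omega⟩ ⟨n - 1, by omega⟩ (by change j₀ < n - 1; omega)
          hj₀u hlast (by
            intro k hk1 hk2
            have h1 : j₀ < (k : ℕ) := hk1
            have h2 : (k : ℕ) < n - 1 := hk2
            have := hgr (k : ℕ) h1 (by omega)
            rw [huv] at this
            simp only [dif_pos (show (k:ℕ) < n from k.2)] at this
            convert this using 2
            )
        rw [show (n - 1) - j₀ - 1 = s by omega] at this
        exact this
      set v : Fin m → Fin 2 := fun i => u ⟨i, by omega⟩ with hv
      have hvL : v ∈ LF S m := by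
        rw [mem_LF]
        refine ⟨good_restrict S (by omega) u hg, ⟨j₀, by omega⟩, by simp; omega, ?_⟩
        rw [hv]
        exact hj₀u
      have hueq : u = extw n m s v := by
        funext i
        simp only [extw]
        by_cases h1 : (i : ℕ) < m
        · rw [dif_pos h1, hv]
        · rw [dif_neg h1]
          by_cases h2 : (i : ℕ) = m + s
          · rw [if_pos h2]
            have : i = (⟨n - 1, by omega⟩ : Fin n) := by ext; simp; omega
            rw [this]; exact hlast
          · rw [if_neg h2]
            have := hgr (i : ℕ) (by omega) (by omega)
            rw [huv] at this
            simp only [dif_pos (show (i:ℕ) < n from i.2)] at this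
            rw [← this]
      refine Finset.mem_insert.2 (Or.inr ?_)
      rw [Finset.mem_biUnion]
      refine ⟨s, mem_Sfil.2 ⟨by omega, hsS⟩, ?_⟩
      rw [Finset.mem_image]
      exact ⟨v, hvL, hueq.symm⟩
    · -- u is the single word
      push_neg at hex
      refine Finset.mem_insert.2 (Or.inl ?_)
      funext i
      simp only [singleW]
      by_cases h1 : (i : ℕ) + 1 = n
      · rw [if_pos h1]
        have : i = (⟨n - 1, by omega⟩ : Fin n) := by ext; simp; omega
        rw [this]; exact hlast
      · rw [if_neg h1]
        have := hex (i : ℕ) (by omega)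
        rw [huv] at this
        simp only [dif_pos (show (i:ℕ) < n from i.2)] at this
        refine fin2ne _ ?_
        intro hcon
        exact this (by rw [← hcon])
  calc (LF S n).card ≤ _ := Finset.card_le_card hsub
    _ ≤ 1 + _ := by rw [add_comm]; exact Finset.card_insert_le _ _
    _ ≤ 1 + ∑ s ∈ Sfil S (n - 1), (LF S (n - s - 1)).card := by
        gcongr
        refine Finset.card_biUnion_le.trans ?_
        exact Finset.sum_le_sum (fun s _ => Finset.card_image_le)



/-- C3: any good word is zeros, or a word ending in 1 padded by zeros. -/
lemma GF_le (S : Set ℕ) (n : ℕ) :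
    (GF S n).card ≤ 1 + ∑ j ∈ Finset.range n, (LF S (j + 1)).card := by
  classical
  have hsub : GF S n ⊆ insert (fun _ => 0)
      ((Finset.range n).biUnion (fun j => (LF S (j + 1)).image (zeroExt n (j + 1)))) := by
    intro u hu
    have hg := mem_GF.1 hu
    set uv : ℕ → Fin 2 := fun j => if h : j < n then u ⟨j, h⟩ else 0 with huv
    by_cases hex : ∃ j, j < n ∧ uv j = 1
    · obtain ⟨j₁, hj₁, hj₁1⟩ := hex
      set Q : ℕ → Prop := fun j => j < n ∧ uv j = 1 with hQ
      set j₀ := Nat.findGreatest Q n with hj₀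
      have hspec : Q j₀ := Nat.findGreatest_spec (m := j₁) (by omega) ⟨hj₁, hj₁1⟩
      obtain ⟨hj₀n, hj₀1⟩ := hspec
      have hgr : ∀ k, j₀ < k → k < n → uv k = 0 := by
        intro k h1 h2
        have hng := Nat.findGreatest_is_greatest (n := n) (P := Q) h1 (by omega)
        exact fin2ne _ (fun hc => hng ⟨h2, hc⟩)
      have hj₀u : u ⟨j₀, by omega⟩ = 1 := by
        rw [huv] at hj₀1
        simp only [dif_pos (show j₀ < n by omega)] at hj₀1
        exact hj₀1
      set m := j₀ + 1 with hm
      set v : Fin m → Fin 2 := fun i => u ⟨i, by omega⟩ with hv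
      have hvL : v ∈ LF S m := by
        rw [mem_LF]
        refine ⟨good_restrict S (by omega) u hg, ⟨j₀, by omega⟩, by simp [hm], ?_⟩
        rw [hv]
        exact hj₀u
      have hueq : u = zeroExt n m v := by
        funext i
        simp only [zeroExt]
        by_cases h1 : (i : ℕ) < m
        · rw [dif_pos h1, hv]
        · rw [dif_neg h1]
          have := hgr (i : ℕ) (by omega) i.2
          rw [huv] at this
          simp only [dif_pos (show (i:ℕ) < n from i.2)] at this
          rw [← this]
      refine Finset.mem_insert.2 (Or.inr ?_)
      rw [Finset.mem_biUnion]
      exact ⟨j₀, Finset.mem_range.2 (by omega), Finset.mem_image.2 ⟨v, hvL, hueq.symm⟩⟩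
    · push_neg at hex
      refine Finset.mem_insert.2 (Or.inl ?_)
      funext i
      have := hex (i : ℕ) i.2
      rw [huv] at this
      simp only [dif_pos (show (i:ℕ) < n from i.2)] at this
      refine fin2ne _ ?_
      intro hcon
      exact this (by rw [← hcon])
  calc (GF S n).card ≤ _ := Finset.card_le_card hsub
    _ ≤ 1 + _ := by rw [add_comm]; exact Finset.card_insert_le _ _
    _ ≤ 1 + ∑ j ∈ Finset.range n, (LF S (j + 1)).card := by
        gcongr
        refine Finset.card_biUnion_le.trans ?_
        exact Finset.sum_le_sum (fun j _ => Finset.card_image_le)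

lemma one_le_LF1 (S : Set ℕ) : 1 ≤ (LF S 1).card := by
  have : (fun _ => 1 : Fin 1 → Fin 2) ∈ LF S 1 := by
    rw [mem_LF]
    refine ⟨?_, ⟨0, by simp⟩, by simp⟩
    intro i j hij _ _ _
    exact absurd hij (by omega)
  exact Finset.card_pos.2 ⟨_, this⟩

lemma one_le_GF (S : Set ℕ) (n : ℕ) : 1 ≤ (GF S n).card := by
  have : (fun _ => 0 : Fin n → Fin 2) ∈ GF S n := by
    rw [mem_GF]
    intro i j hij h1 _ _
    simp at h1
  exact Finset.card_pos.2 ⟨_, this⟩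

lemma LF_le_GF (S : Set ℕ) (n : ℕ) : (LF S n).card ≤ (GF S n).card := by
  refine Finset.card_le_card ?_
  intro u hu
  exact mem_GF.2 (mem_LF.1 hu).1

lemma GF_le_pow (S : Set ℕ) (n : ℕ) : (GF S n).card ≤ 2 ^ n := by
  calc (GF S n).card ≤ (Finset.univ : Finset (Fin n → Fin 2)).card := Finset.card_le_univ _
    _ = 2 ^ n := by simp [Finset.card_univ]



lemma filter_Icc (s N : ℕ) :
    (Finset.Icc 1 N).filter (fun n => s + 2 ≤ n) = Finset.Icc (s + 2) N := by
  ext n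
  simp [Finset.mem_filter, Finset.mem_Icc]
  omega

lemma inner_reindex (x : ℝ) (F : ℕ → ℝ) (s N : ℕ) :
    ∑ n ∈ Finset.Icc (s + 2) N, x ^ n * F (n - s - 1)
      = ∑ m ∈ Finset.Icc 1 (N - s - 1), x ^ (m + s + 1) * F m := by
  refine Finset.sum_nbij' (i := fun n => n - s - 1) (j := fun m => m + s + 1) ?_ ?_ ?_ ?_ ?_
  · intro n hn
    simp only [Finset.mem_Icc] at *
    omega
  · intro m hm
    simp only [Finset.mem_Icc] at *
    omega
  · intro n hn
    simp only [Finset.mem_Icc] at hn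
    show n - s - 1 + s + 1 = n
    omega
  · intro m hm
    simp only [Finset.mem_Icc] at hm
    show m + s + 1 - s - 1 = m
    omega
  · intro n hn
    simp only [Finset.mem_Icc] at hn
    rw [show n - s - 1 + s + 1 = n by omega]

lemma swap_sum (x : ℝ) (F : ℕ → ℝ) (T : Finset ℕ) (N : ℕ) :
    ∑ n ∈ Finset.Icc 1 N, ∑ s ∈ T.filter (fun s => s + 2 ≤ n), x ^ n * F (n - s - 1)
      = ∑ s ∈ T, x ^ (s + 1) * ∑ m ∈ Finset.Icc 1 (N - s - 1), x ^ m * F m := by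
  classical
  have h1 : ∀ n, ∑ s ∈ T.filter (fun s => s + 2 ≤ n), x ^ n * F (n - s - 1)
      = ∑ s ∈ T, if s + 2 ≤ n then x ^ n * F (n - s - 1) else 0 := by
    intro n
    rw [Finset.sum_filter]
  simp only [h1]
  rw [Finset.sum_comm]
  refine Finset.sum_congr rfl (fun s _ => ?_)
  rw [← Finset.sum_filter, filter_Icc, inner_reindex]
  rw [Finset.mul_sum]
  refine Finset.sum_congr rfl (fun m _ => ?_)
  rw [pow_add, pow_add]
  ring

lemma geom_tail_le (x : ℝ) (hx0 : 0 ≤ x) (hx1 : x < 1) (N : ℕ) :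
    ∑ n ∈ Finset.Icc 1 N, x ^ n ≤ (1 - x)⁻¹ := by
  have h1 : ∑ n ∈ Finset.Icc 1 N, x ^ n ≤ ∑ n ∈ Finset.range (N + 1), x ^ n := by
    refine Finset.sum_le_sum_of_subset_of_nonneg ?_ (fun i _ _ => pow_nonneg hx0 i)
    intro n hn
    simp only [Finset.mem_Icc, Finset.mem_range] at *
    omega
  refine h1.trans ?_
  have := Summable.sum_le_tsum (Finset.range (N + 1)) (fun i _ => pow_nonneg hx0 i)
    (summable_geometric_of_lt_one hx0 hx1)
  rwa [tsum_geometric_of_lt_one hx0 hx1] at this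



lemma lin_sub_log (L M : ℝ) (hL : 0 < L) (hM : 0 ≤ M) :
    Tendsto (fun j : ℕ => j * L - Real.log (1 + j * M)) atTop atTop := by
  have h1 : Tendsto (fun j : ℕ => (j : ℝ)) atTop atTop := tendsto_natCast_atTop_atTop
  rcases eq_or_lt_of_le hM with hM0 | hMpos
  · simp only [← hM0, mul_zero, add_zero, Real.log_one, sub_zero]
    exact h1.atTop_mul_const hL
  · set ε := L / (2 * M) with hε
    have hεpos : 0 < ε := by positivity
    have hev : ∀ᶠ t : ℝ in atTop, ‖Real.log t‖ ≤ ε * ‖t‖ :=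
      Real.isLittleO_log_id_atTop.def hεpos
    have ht : Tendsto (fun j : ℕ => 1 + (j : ℝ) * M) atTop atTop := by
      exact tendsto_atTop_add_const_left _ 1 (h1.atTop_mul_const hMpos)
    have hev2 : ∀ᶠ j : ℕ in atTop, Real.log (1 + (j : ℝ) * M) ≤ ε * (1 + j * M) := by
      filter_upwards [ht.eventually hev, ht.eventually_ge_atTop 1] with j hj hj1
      have hpos : (0 : ℝ) < 1 + (j : ℝ) * M := by nlinarith
      rw [Real.norm_eq_abs, Real.norm_eq_abs, abs_of_pos hpos] at hj
      calc Real.log (1 + (j:ℝ)*M) ≤ |Real.log (1 + (j:ℝ)*M)| := le_abs_self _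
        _ ≤ ε * (1 + (j:ℝ)*M) := hj
    have hlow : ∀ᶠ j : ℕ in atTop,
        (j : ℝ) * (L / 2) - ε ≤ (j : ℝ) * L - Real.log (1 + (j : ℝ) * M) := by
      filter_upwards [hev2] with j hj
      have : ε * ((j : ℝ) * M) = (j : ℝ) * (L / 2) := by
        rw [hε, div_mul_eq_mul_div, div_eq_iff (mul_ne_zero two_ne_zero (ne_of_gt hMpos))]
        ring
      nlinarith [hj]
    refine tendsto_atTop_mono' atTop hlow ?_
    have : Tendsto (fun j : ℕ => (j : ℝ) * (L / 2)) atTop atTop :=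
      h1.atTop_mul_const (by positivity)
    exact tendsto_atTop_add_const_right _ (-ε) this


set_option maxHeartbeats 1000000 in
lemma claimA (S : Set ℕ) (h : ℝ) (hh : 0 ≤ h)
    (hent : Tendsto (fun n : ℕ => Real.log ((GF S n).card : ℝ) / n) atTop (𝓝 h))
    (T : Finset ℕ) (hT : ↑T ⊆ S) :
    ∑ s ∈ T, Real.exp (-h) ^ (s + 1) ≤ 1 := by
  classical
  set x := Real.exp (-h) with hxdef
  have hx0 : 0 < x := Real.exp_pos _
  have hx1 : x ≤ 1 := by
    rw [hxdef, show (1:ℝ) = Real.exp 0 from (Real.exp_zero).symm]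
    exact Real.exp_le_exp.2 (by linarith)
  have hlogx : Real.log x = -h := Real.log_exp _
  by_contra hcon
  push_neg at hcon
  set c := ∑ s ∈ T, x ^ (s + 1) with hcdef
  have hc1 : 1 < c := hcon
  have hc0 : 0 < c := by linarith
  have hTne : T.Nonempty := by
    rcases Finset.eq_empty_or_nonempty T with rfl | hne
    · rw [hcdef] at hc1; simp at hc1; linarith
    · exact hne
  set M := T.sup id + 1 with hMdef
  have hM1 : 1 ≤ M := by omega
  have hsM : ∀ s ∈ T, s + 1 ≤ M := by
    intro s hs
    have := Finset.le_sup (f := id) hs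
    simp only [id] at this
    omega
  set bb : ℕ → ℝ := fun n => ((LF S n).card : ℝ) with hbb
  set aa : ℕ → ℝ := fun n => ((GF S n).card : ℝ) with haa
  have hbnn : ∀ n, 0 ≤ bb n := fun n => Nat.cast_nonneg _
  have hann : ∀ n, 1 ≤ aa n := fun n => by
    show (1:ℝ) ≤ ((GF S n).card : ℝ); exact_mod_cast one_le_GF S n
  have hapow : ∀ n, aa n ≤ 2 ^ n := fun n => by
    show ((GF S n).card : ℝ) ≤ 2 ^ n; exact_mod_cast GF_le_pow S n
  have hba : ∀ n, bb n ≤ aa n := fun n => by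
    show ((LF S n).card : ℝ) ≤ ((GF S n).card : ℝ); exact_mod_cast LF_le_GF S n
  set Q : ℕ → ℝ := fun N => ∑ n ∈ Finset.Icc 1 N, x ^ n * bb n with hQ
  have hQmono : ∀ ⦃N N'⦄, N ≤ N' → Q N ≤ Q N' := by
    intro N N' hNN
    refine Finset.sum_le_sum_of_subset_of_nonneg ?_
      (fun i _ _ => mul_nonneg (by positivity) (hbnn i))
    exact Finset.Icc_subset_Icc le_rfl hNN
  have hQrec : ∀ N, c * Q (N - M) ≤ Q N := by
    intro N
    have step2 : ∑ s ∈ T, x ^ (s + 1) * Q (N - M) ≤ ∑ s ∈ T, x ^ (s + 1) * Q (N - s - 1) := by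
      refine Finset.sum_le_sum (fun s hs => ?_)
      refine mul_le_mul_of_nonneg_left (hQmono ?_) (by positivity)
      have := hsM s hs; omega
    have step3 : ∑ s ∈ T, x ^ (s + 1) * Q (N - s - 1)
        = ∑ n ∈ Finset.Icc 1 N, ∑ s ∈ T.filter (fun s => s + 2 ≤ n), x ^ n * bb (n - s - 1) :=
      (swap_sum x bb T N).symm
    have step4 : ∑ n ∈ Finset.Icc 1 N, ∑ s ∈ T.filter (fun s => s + 2 ≤ n), x ^ n * bb (n - s - 1)
        ≤ Q N := by
      refine Finset.sum_le_sum (fun n _ => ?_)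
      rw [← Finset.mul_sum]
      refine mul_le_mul_of_nonneg_left ?_ (by positivity)
      have hnat := sum_le_LF S T hT n
      calc ∑ s ∈ T.filter (fun s => s + 2 ≤ n), bb (n - s - 1)
          = ((∑ s ∈ T.filter (fun s => s + 2 ≤ n), (LF S (n - s - 1)).card : ℕ) : ℝ) := by
            rw [hbb]; push_cast; rfl
        _ ≤ ((LF S n).card : ℝ) := by exact_mod_cast hnat
    have step1 : c * Q (N - M) = ∑ s ∈ T, x ^ (s + 1) * Q (N - M) := by
      rw [hcdef, Finset.sum_mul]
    rw [step1]
    calc ∑ s ∈ T, x ^ (s + 1) * Q (N - M) ≤ _ := step2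
      _ = _ := step3
      _ ≤ Q N := step4
  have hQpow : ∀ j : ℕ, c ^ j * x ≤ Q (1 + j * M) := by
    intro j
    induction j with
    | zero =>
      have hQ1 : Q 1 = x * bb 1 := by
        show (∑ n ∈ Finset.Icc 1 1, x ^ n * bb n) = x * bb 1
        rw [Finset.Icc_self, Finset.sum_singleton, pow_one]
      rw [show 1 + 0 * M = 1 by simp, pow_zero, one_mul, hQ1]
      have hb1 : (1:ℝ) ≤ bb 1 := by
        show (1:ℝ) ≤ ((LF S 1).card : ℝ); exact_mod_cast one_le_LF1 S
      nlinarith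
    | succ j ih =>
      have e1 : (1 + (j + 1) * M) - M = 1 + j * M := by
        rw [Nat.succ_mul]; omega
      calc c ^ (j + 1) * x = c * (c ^ j * x) := by ring
        _ ≤ c * Q (1 + j * M) := mul_le_mul_of_nonneg_left ih (by linarith)
        _ = c * Q ((1 + (j + 1) * M) - M) := by rw [e1]
        _ ≤ Q (1 + (j + 1) * M) := hQrec _
  have hpigeon : ∀ j : ℕ, ∃ n, 1 ≤ n ∧ n ≤ 1 + j * M ∧
      c ^ j * x / ((1 + j * M : ℕ) : ℝ) ≤ aa n * x ^ n := by
    intro j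
    set N := 1 + j * M with hN
    have hNpos : 0 < N := by omega
    by_contra hno
    push_neg at hno
    have hlt : ∀ n ∈ Finset.Icc 1 N, x ^ n * aa n < c ^ j * x / (N : ℝ) := by
      intro n hn
      rw [Finset.mem_Icc] at hn
      have := hno n hn.1 hn.2
      linarith [this]
    have hsumlt : ∑ n ∈ Finset.Icc 1 N, x ^ n * aa n
        < ∑ n ∈ Finset.Icc 1 N, c ^ j * x / (N : ℝ) :=
      Finset.sum_lt_sum_of_nonempty ⟨1, by simp [Finset.mem_Icc]; omega⟩ hlt
    have hconst : ∑ n ∈ Finset.Icc 1 N, c ^ j * x / (N : ℝ) = c ^ j * x := by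
      rw [Finset.sum_const, Nat.card_Icc, nsmul_eq_mul]
      rw [show N + 1 - 1 = N from rfl]
      field_simp
    have hQa : Q N ≤ ∑ n ∈ Finset.Icc 1 N, x ^ n * aa n :=
      Finset.sum_le_sum (fun n _ => mul_le_mul_of_nonneg_left (hba n) (by positivity))
    have := hQpow j
    rw [hconst] at hsumlt
    linarith
  set L := Real.log c with hL
  have hLpos : 0 < L := Real.log_pos hc1
  set δ := L / (2 * (M : ℝ)) with hδ
  have hMR : (1:ℝ) ≤ (M:ℝ) := by exact_mod_cast hM1
  have hδpos : 0 < δ := by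
    rw [hδ]
    positivity
  have hev : ∀ᶠ n : ℕ in atTop, Real.log (aa n) / n < h + δ :=
    hent.eventually (gt_mem_nhds (by linarith : h < h + δ))
  obtain ⟨K, hK⟩ := eventually_atTop.1 hev
  have htendA : Tendsto (fun j : ℕ => (j : ℝ) * L - Real.log (1 + (j : ℝ) * (M : ℝ)))
      atTop atTop := lin_sub_log L (M : ℝ) hLpos (by linarith)
  have htendB : Tendsto (fun j : ℕ => (j : ℝ) * (L / 2) - Real.log (1 + (j : ℝ) * (M : ℝ)))
      atTop atTop := lin_sub_log (L / 2) (M : ℝ) (by linarith) (by linarith)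
  have hevA : ∀ᶠ j : ℕ in atTop,
      (K : ℝ) * Real.log 2 - Real.log x < (j : ℝ) * L - Real.log (1 + (j : ℝ) * (M : ℝ)) :=
    htendA.eventually_gt_atTop _
  have hevB : ∀ᶠ j : ℕ in atTop,
      δ - Real.log x ≤ (j : ℝ) * (L / 2) - Real.log (1 + (j : ℝ) * (M : ℝ)) :=
    htendB.eventually_ge_atTop _
  obtain ⟨j, hjA, hjB⟩ := (hevA.and hevB).exists
  obtain ⟨n, hn1, hn2, hnv⟩ := hpigeon j
  set N := 1 + j * M with hN
  have hNpos : 0 < N := by omega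
  have hNR : (0:ℝ) < (N : ℝ) := by exact_mod_cast hNpos
  have hNcast : ((N : ℕ) : ℝ) = 1 + (j : ℝ) * (M : ℝ) := by
    rw [hN]; push_cast; ring
  have hvpos : 0 < c ^ j * x / (N : ℝ) := by positivity
  have hlogv : Real.log (c ^ j * x / (N : ℝ))
      = (j : ℝ) * L + Real.log x - Real.log (1 + (j : ℝ) * (M : ℝ)) := by
    rw [Real.log_div (by positivity) (by positivity), Real.log_mul (by positivity) (ne_of_gt hx0),
      Real.log_pow, hNcast, hL]
  -- n is large
  have hKn : K < n := by
    by_contra hle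
    push_neg at hle
    have h1 : aa n * x ^ n ≤ (2:ℝ) ^ K := by
      calc aa n * x ^ n ≤ aa n * 1 := by
            refine mul_le_mul_of_nonneg_left ?_ (by linarith [hann n])
            exact pow_le_one₀ (le_of_lt hx0) hx1
        _ = aa n := mul_one _
        _ ≤ 2 ^ n := hapow n
        _ ≤ 2 ^ K := by
            refine pow_le_pow_right₀ (by norm_num) hle
    have h2 : (2:ℝ) ^ K < c ^ j * x / (N : ℝ) := by
      have hlog2 : Real.log ((2:ℝ) ^ K) = (K : ℝ) * Real.log 2 := by
        rw [Real.log_pow]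
      have := hjA
      have hlt : Real.log ((2:ℝ) ^ K) < Real.log (c ^ j * x / (N : ℝ)) := by
        rw [hlog2, hlogv]; linarith
      have h2pos : (0:ℝ) < (2:ℝ) ^ K := by positivity
      exact (Real.log_lt_log_iff h2pos hvpos).1 hlt
    linarith
  have hKn' := hK n (le_of_lt hKn)
  have hnRpos : (0:ℝ) < (n : ℝ) := by exact_mod_cast hn1
  have hlogan : Real.log (aa n) < (n : ℝ) * (h + δ) := by
    rw [div_lt_iff₀ hnRpos] at hKn'
    linarith
  have halow : c ^ j * x / (N : ℝ) / x ^ n ≤ aa n := by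
    rw [div_le_iff₀ (by positivity)]
    exact hnv
  have hloglow : (j : ℝ) * L + Real.log x - Real.log (1 + (j : ℝ) * (M : ℝ)) + (n : ℝ) * h
      ≤ Real.log (aa n) := by
    have hpos2 : 0 < c ^ j * x / (N : ℝ) / x ^ n := by positivity
    have := Real.log_le_log hpos2 halow
    rw [Real.log_div (ne_of_gt hvpos) (by positivity), Real.log_pow, hlogv] at this
    have hxn : (n : ℝ) * Real.log x = -((n : ℝ) * h) := by rw [hlogx]; ring
    rw [hxn] at this
    linarith
  -- combine
  have hfin1 : (n : ℝ) * δ > (j : ℝ) * L + Real.log x - Real.log (1 + (j : ℝ) * (M : ℝ)) := by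
    nlinarith [hlogan, hloglow]
  have hfin2 : (j : ℝ) * L + Real.log x - Real.log (1 + (j : ℝ) * (M : ℝ)) ≥ ((N : ℕ) : ℝ) * δ := by
    rw [hNcast]
    have expand : (1 + (j : ℝ) * (M : ℝ)) * δ = δ + (j : ℝ) * ((M : ℝ) * δ) := by ring
    have hMδ : (M : ℝ) * δ = L / 2 := by
      rw [hδ]
      field_simp
    rw [expand, hMδ]
    linarith
  have hnN : (n : ℝ) ≤ ((N : ℕ) : ℝ) := by exact_mod_cast hn2
  nlinarith [hfin1, hfin2, hδpos]

lemma geom_range_le (x : ℝ) (hx0 : 0 ≤ x) (hx1 : x < 1) (N : ℕ) :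
    ∑ n ∈ Finset.range N, x ^ n ≤ (1 - x)⁻¹ := by
  have := Summable.sum_le_tsum (Finset.range N) (fun i _ => pow_nonneg hx0 i)
    (summable_geometric_of_lt_one hx0 hx1)
  rwa [tsum_geometric_of_lt_one hx0 hx1] at this

lemma pow_sub_pow_le' (x y : ℝ) (hx : 0 ≤ x) (hxy : x ≤ y) :
    ∀ k : ℕ, y ^ (k + 1) - x ^ (k + 1) ≤ ((k : ℝ) + 1) * y ^ k * (y - x) := by
  intro k
  induction k with
  | zero => simp
  | succ k ih =>
    have hy : 0 ≤ y := le_trans hx hxy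
    have hxk : x ^ (k + 1) ≤ y ^ (k + 1) := pow_le_pow_left₀ hx hxy _
    have e1 : y ^ (k + 2) - x ^ (k + 2)
        = y * (y ^ (k + 1) - x ^ (k + 1)) + x ^ (k + 1) * (y - x) := by ring
    have e2 : y * (y ^ (k + 1) - x ^ (k + 1)) ≤ y * (((k : ℝ) + 1) * y ^ k * (y - x)) :=
      mul_le_mul_of_nonneg_left ih hy
    have e3 : x ^ (k + 1) * (y - x) ≤ y ^ (k + 1) * (y - x) :=
      mul_le_mul_of_nonneg_right hxk (by linarith)
    have e4 : y * (((k : ℝ) + 1) * y ^ k * (y - x)) = ((k : ℝ) + 1) * y ^ (k + 1) * (y - x) := by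
      ring
    push_cast
    nlinarith [e1, e2, e3, e4]

lemma sum_Sfil_le_tsum (S : Set ℕ) (t : ℝ) (ht0 : 0 ≤ t) (ht1 : t < 1) (N : ℕ) :
    ∑ s ∈ Sfil S N, t ^ (s + 1)
      ≤ ∑' s : ℕ, Set.indicator S (fun s => t ^ (s + 1)) s := by
  classical
  have hsummable : Summable (Set.indicator S fun s => t ^ (s + 1)) := by
    refine Summable.of_nonneg_of_le (fun s => Set.indicator_nonneg (fun s _ => by positivity) s)
      (fun s => ?_) (summable_geometric_of_lt_one ht0 ht1)
    by_cases hsS : s ∈ S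
    · rw [Set.indicator_of_mem hsS]
      calc t ^ (s + 1) = t * t ^ s := by ring
        _ ≤ 1 * t ^ s := mul_le_mul_of_nonneg_right (by linarith) (by positivity)
        _ = t ^ s := one_mul _
    · rw [Set.indicator_of_notMem hsS]
      positivity
  have heq : ∑ s ∈ Sfil S N, t ^ (s + 1)
      = ∑ s ∈ Sfil S N, Set.indicator S (fun s => t ^ (s + 1)) s := by
    refine Finset.sum_congr rfl (fun s hs => ?_)
    rw [Set.indicator_of_mem (mem_Sfil.1 hs).2]
  rw [heq]
  exact Summable.sum_le_tsum _ (fun s _ => Set.indicator_nonneg (fun s _ => by positivity) s) hsummable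

set_option maxHeartbeats 1000000 in
lemma claimB (S : Set ℕ) (h : ℝ) (hh : 0 < h)
    (hent : Tendsto (fun n : ℕ => Real.log ((GF S n).card : ℝ) / n) atTop (𝓝 h))
    (hclt : ∑' s : ℕ, Set.indicator S (fun s => Real.exp (-h) ^ (s + 1)) s < 1) : False := by
  classical
  set x := Real.exp (-h) with hxdef
  have hx0 : 0 < x := Real.exp_pos _
  have hx1 : x < 1 := Real.exp_lt_one_iff.2 (by linarith)
  set c := ∑' s : ℕ, Set.indicator S (fun s => x ^ (s + 1)) s with hcdef
  have hc0 : 0 ≤ c :=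
    tsum_nonneg (fun s => Set.indicator_nonneg (fun s _ => by positivity) s)
  have hc1 : c < 1 := hclt
  set y₀ := (1 + x) / 2 with hy₀
  have hy₀1 : y₀ < 1 := by rw [hy₀]; linarith
  have hy₀0 : 0 < y₀ := by rw [hy₀]; linarith
  have hxy₀ : x < y₀ := by rw [hy₀]; linarith
  have hDsum : Summable (fun s : ℕ => ((s : ℝ) + 1) * y₀ ^ s) := by
    have h1 : Summable (fun s : ℕ => (s : ℝ) * y₀ ^ s) := by
      have := summable_pow_mul_geometric_of_norm_lt_one (R := ℝ) 1
        (r := y₀) (by rw [Real.norm_eq_abs, abs_of_pos hy₀0]; exact hy₀1)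
      simpa using this
    have h2 : Summable (fun s : ℕ => y₀ ^ s) :=
      summable_geometric_of_lt_one (le_of_lt hy₀0) hy₀1
    have := h1.add h2
    refine this.congr (fun s => by ring)
  set D := ∑' s : ℕ, ((s : ℝ) + 1) * y₀ ^ s with hD
  have hD0 : 0 ≤ D := tsum_nonneg (fun s => by positivity)
  set y := x + min ((1 - c) / (2 * (D + 1))) ((1 - x) / 2) with hy
  have hminpos : 0 < min ((1 - c) / (2 * (D + 1))) ((1 - x) / 2) := by
    refine lt_min (div_pos (by linarith) (by linarith)) (by linarith)
  have hxy : x < y := by rw [hy]; linarith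
  have hyy₀ : y ≤ y₀ := by
    rw [hy, hy₀]
    have := min_le_right ((1 - c) / (2 * (D + 1))) ((1 - x) / 2)
    linarith
  have hy1 : y < 1 := lt_of_le_of_lt hyy₀ hy₀1
  have hy0 : 0 < y := lt_trans hx0 hxy
  have hgap : (y - x) * D ≤ (1 - c) / 2 := by
    have h1 : y - x ≤ (1 - c) / (2 * (D + 1)) := by
      rw [hy]
      have := min_le_left ((1 - c) / (2 * (D + 1))) ((1 - x) / 2)
      linarith
    have h2 : (y - x) * D ≤ (1 - c) / (2 * (D + 1)) * D :=
      mul_le_mul_of_nonneg_right h1 hD0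
    refine h2.trans ?_
    rw [div_mul_eq_mul_div, div_le_div_iff₀ (by positivity) (by norm_num)]
    nlinarith
  set c' := (1 + c) / 2 with hc'
  have hc'1 : c' < 1 := by rw [hc']; linarith
  have hc'0 : 0 ≤ c' := by rw [hc']; linarith
  -- partial sums of y-series bounded by c'
  have hfy : ∀ N, ∑ s ∈ Sfil S N, y ^ (s + 1) ≤ c' := by
    intro N
    have hsplit : ∑ s ∈ Sfil S N, y ^ (s + 1)
        = ∑ s ∈ Sfil S N, x ^ (s + 1) + ∑ s ∈ Sfil S N, (y ^ (s + 1) - x ^ (s + 1)) := by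
      rw [← Finset.sum_add_distrib]
      refine Finset.sum_congr rfl (fun s _ => by ring)
    have h1 : ∑ s ∈ Sfil S N, x ^ (s + 1) ≤ c :=
      sum_Sfil_le_tsum S x (le_of_lt hx0) hx1 N
    have h2 : ∑ s ∈ Sfil S N, (y ^ (s + 1) - x ^ (s + 1))
        ≤ ∑ s ∈ Finset.range N, (y ^ (s + 1) - x ^ (s + 1)) := by
      refine Finset.sum_le_sum_of_subset_of_nonneg ?_ (fun s _ _ => ?_)
      · intro s hs
        exact Finset.mem_range.2 (mem_Sfil.1 hs).1
      · have := pow_le_pow_left₀ (le_of_lt hx0) (le_of_lt hxy) (s + 1)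
        linarith
    have h3 : ∑ s ∈ Finset.range N, (y ^ (s + 1) - x ^ (s + 1))
        ≤ ∑ s ∈ Finset.range N, ((s : ℝ) + 1) * y₀ ^ s * (y - x) := by
      refine Finset.sum_le_sum (fun s _ => ?_)
      have hp := pow_sub_pow_le' x y (le_of_lt hx0) (le_of_lt hxy) s
      have hys : y ^ s ≤ y₀ ^ s := pow_le_pow_left₀ (le_of_lt hy0) hyy₀ s
      have : ((s : ℝ) + 1) * y ^ s * (y - x) ≤ ((s : ℝ) + 1) * y₀ ^ s * (y - x) := by
        have hyx : 0 ≤ y - x := by linarith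
        have h4 : ((s : ℝ) + 1) * y ^ s ≤ ((s : ℝ) + 1) * y₀ ^ s :=
          mul_le_mul_of_nonneg_left hys (by positivity)
        exact mul_le_mul_of_nonneg_right h4 hyx
      linarith
    have h4 : ∑ s ∈ Finset.range N, ((s : ℝ) + 1) * y₀ ^ s * (y - x)
        ≤ D * (y - x) := by
      rw [← Finset.sum_mul]
      refine mul_le_mul_of_nonneg_right ?_ (by linarith)
      exact Summable.sum_le_tsum _ (fun s _ => by positivity) hDsum
    have hDyx : D * (y - x) ≤ (1 - c) / 2 := by rw [mul_comm]; exact hgap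
    have hfinal : ∑ s ∈ Sfil S N, y ^ (s + 1) ≤ c + D * (y - x) := by
      rw [hsplit]
      exact add_le_add h1 (h2.trans (h3.trans h4))
    have h6 : c + D * (y - x) ≤ c + (1 - c) / 2 := add_le_add_right hDyx c
    have h7 : c + (1 - c) / 2 = (1 + c) / 2 := by ring
    rw [hc']
    rw [← h7]
    exact hfinal.trans h6
  -- weighted sums of bb
  set bb : ℕ → ℝ := fun n => ((LF S n).card : ℝ) with hbb
  set aa : ℕ → ℝ := fun n => ((GF S n).card : ℝ) with haa
  have hbnn : ∀ n, 0 ≤ bb n := fun n => Nat.cast_nonneg _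
  have hann : ∀ n, 1 ≤ aa n := fun n => by
    show (1:ℝ) ≤ ((GF S n).card : ℝ); exact_mod_cast one_le_GF S n
  have hba : ∀ n, bb n ≤ aa n := fun n => by
    show ((LF S n).card : ℝ) ≤ ((GF S n).card : ℝ); exact_mod_cast LF_le_GF S n
  set By : ℕ → ℝ := fun N => ∑ n ∈ Finset.Icc 1 N, y ^ n * bb n with hBy
  have hBynn : ∀ N, 0 ≤ By N := fun N =>
    Finset.sum_nonneg (fun n _ => mul_nonneg (by positivity) (hbnn n))
  have hBymono : ∀ ⦃N N'⦄, N ≤ N' → By N ≤ By N' := by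
    intro N N' hNN
    refine Finset.sum_le_sum_of_subset_of_nonneg ?_
      (fun i _ _ => mul_nonneg (by positivity) (hbnn i))
    exact Finset.Icc_subset_Icc le_rfl hNN
  have hBrec : ∀ N, By N ≤ (1 - y)⁻¹ + c' * By N := by
    intro N
    have hstep1 : By N ≤ ∑ n ∈ Finset.Icc 1 N,
        (y ^ n + ∑ s ∈ (Sfil S N).filter (fun s => s + 2 ≤ n), y ^ n * bb (n - s - 1)) := by
      refine Finset.sum_le_sum (fun n hn => ?_)
      rw [Finset.mem_Icc] at hn
      have hC2 := LF_le S n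
      have hfil : Sfil S (n - 1) = (Sfil S N).filter (fun s => s + 2 ≤ n) := by
        ext s
        simp only [mem_Sfil, Finset.mem_filter]
        constructor
        · rintro ⟨h1, h2⟩
          exact ⟨⟨by omega, h2⟩, by omega⟩
        · rintro ⟨⟨h1, h2⟩, h3⟩
          exact ⟨by omega, h2⟩
      have hcast : bb n ≤ 1 + ∑ s ∈ (Sfil S N).filter (fun s => s + 2 ≤ n), bb (n - s - 1) := by
        rw [← hfil]
        show ((LF S n).card : ℝ) ≤ 1 + ∑ s ∈ Sfil S (n - 1), ((LF S (n - s - 1)).card : ℝ)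
        have : (1 : ℝ) + ∑ s ∈ Sfil S (n - 1), ((LF S (n - s - 1)).card : ℝ)
            = ((1 + ∑ s ∈ Sfil S (n - 1), (LF S (n - s - 1)).card : ℕ) : ℝ) := by
          push_cast; ring
        rw [this]
        exact_mod_cast hC2
      calc y ^ n * bb n
          ≤ y ^ n * (1 + ∑ s ∈ (Sfil S N).filter (fun s => s + 2 ≤ n), bb (n - s - 1)) :=
            mul_le_mul_of_nonneg_left hcast (by positivity)
        _ = y ^ n + ∑ s ∈ (Sfil S N).filter (fun s => s + 2 ≤ n), y ^ n * bb (n - s - 1) := by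
            rw [mul_add, mul_one, Finset.mul_sum]
    have hstep2 : ∑ n ∈ Finset.Icc 1 N,
        (y ^ n + ∑ s ∈ (Sfil S N).filter (fun s => s + 2 ≤ n), y ^ n * bb (n - s - 1))
        = ∑ n ∈ Finset.Icc 1 N, y ^ n
          + ∑ s ∈ Sfil S N, y ^ (s + 1) * ∑ m ∈ Finset.Icc 1 (N - s - 1), y ^ m * bb m := by
      rw [Finset.sum_add_distrib, swap_sum]
    have hstep3 : ∑ n ∈ Finset.Icc 1 N, y ^ n ≤ (1 - y)⁻¹ :=
      geom_tail_le y (le_of_lt hy0) hy1 N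
    have hstep4 : ∑ s ∈ Sfil S N, y ^ (s + 1) * ∑ m ∈ Finset.Icc 1 (N - s - 1), y ^ m * bb m
        ≤ c' * By N := by
      calc ∑ s ∈ Sfil S N, y ^ (s + 1) * ∑ m ∈ Finset.Icc 1 (N - s - 1), y ^ m * bb m
          ≤ ∑ s ∈ Sfil S N, y ^ (s + 1) * By N := by
            refine Finset.sum_le_sum (fun s _ => ?_)
            exact mul_le_mul_of_nonneg_left (hBymono (by omega)) (by positivity)
        _ = (∑ s ∈ Sfil S N, y ^ (s + 1)) * By N := by rw [Finset.sum_mul]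
        _ ≤ c' * By N := mul_le_mul_of_nonneg_right (hfy N) (hBynn N)
    calc By N ≤ _ := hstep1
      _ = _ := hstep2
      _ ≤ (1 - y)⁻¹ + c' * By N := by
          have := add_le_add hstep3 hstep4
          linarith
  set Kv := (1 - y)⁻¹ / (1 - c') with hKv
  have hKv0 : 0 ≤ Kv := by
    rw [hKv]
    have h1 : (0:ℝ) ≤ (1 - y)⁻¹ := by
      have : (0:ℝ) < 1 - y := by linarith
      positivity
    have h2 : (0:ℝ) < 1 - c' := by linarith
    positivity
  have hByK : ∀ N, By N ≤ Kv := by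
    intro N
    have := hBrec N
    rw [hKv]
    rw [le_div_iff₀ (by linarith : (0:ℝ) < 1 - c')]
    nlinarith [this]
  have hbm : ∀ m, 1 ≤ m → y ^ m * bb m ≤ Kv := by
    intro m hm
    refine le_trans ?_ (hByK m)
    refine Finset.single_le_sum (f := fun n => y ^ n * bb n)
      (fun n _ => mul_nonneg (by positivity) (hbnn n)) ?_
    rw [Finset.mem_Icc]
    omega
  set Cv := 1 + Kv * (1 - y)⁻¹ with hCv
  have hCv1 : 1 ≤ Cv := by
    rw [hCv]
    have : (0:ℝ) ≤ (1 - y)⁻¹ := by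
      have : (0:ℝ) < 1 - y := by linarith
      positivity
    nlinarith
  have hAv : ∀ n, y ^ n * aa n ≤ Cv := by
    intro n
    have hC3 := GF_le S n
    have hcast : aa n ≤ 1 + ∑ j ∈ Finset.range n, bb (j + 1) := by
      show ((GF S n).card : ℝ) ≤ 1 + ∑ j ∈ Finset.range n, ((LF S (j + 1)).card : ℝ)
      have : (1:ℝ) + ∑ j ∈ Finset.range n, ((LF S (j + 1)).card : ℝ)
          = ((1 + ∑ j ∈ Finset.range n, (LF S (j + 1)).card : ℕ) : ℝ) := by push_cast; ring
      rw [this]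
      exact_mod_cast hC3
    have h1 : y ^ n * aa n ≤ y ^ n + ∑ j ∈ Finset.range n, y ^ n * bb (j + 1) := by
      calc y ^ n * aa n ≤ y ^ n * (1 + ∑ j ∈ Finset.range n, bb (j + 1)) :=
            mul_le_mul_of_nonneg_left hcast (by positivity)
        _ = y ^ n + ∑ j ∈ Finset.range n, y ^ n * bb (j + 1) := by
            rw [mul_add, mul_one, Finset.mul_sum]
    have h2 : ∀ j ∈ Finset.range n, y ^ n * bb (j + 1) ≤ y ^ (n - j - 1) * Kv := by
      intro j hj
      rw [Finset.mem_range] at hj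
      have he : y ^ n = y ^ (n - j - 1) * y ^ (j + 1) := by
        rw [← pow_add]
        congr 1
        omega
      rw [he, mul_assoc]
      exact mul_le_mul_of_nonneg_left (hbm (j + 1) (by omega)) (by positivity)
    have h3 : ∑ j ∈ Finset.range n, y ^ n * bb (j + 1)
        ≤ ∑ j ∈ Finset.range n, y ^ (n - j - 1) * Kv :=
      Finset.sum_le_sum h2
    have h4 : ∑ j ∈ Finset.range n, y ^ (n - j - 1) * Kv ≤ Kv * (1 - y)⁻¹ := by
      rw [← Finset.sum_mul]
      have hr : ∑ j ∈ Finset.range n, y ^ (n - j - 1) = ∑ j ∈ Finset.range n, y ^ j := by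
        have := Finset.sum_range_reflect (fun j => y ^ j) n
        calc ∑ j ∈ Finset.range n, y ^ (n - j - 1)
            = ∑ j ∈ Finset.range n, y ^ (n - 1 - j) := by
              refine Finset.sum_congr rfl (fun j hj => ?_)
              rw [Finset.mem_range] at hj
              congr 1
              omega
          _ = ∑ j ∈ Finset.range n, y ^ j := this
      rw [hr, mul_comm Kv ((1 - y)⁻¹)]
      exact mul_le_mul_of_nonneg_right (geom_range_le y (le_of_lt hy0) hy1 n) hKv0
    have h5 : y ^ n ≤ 1 := pow_le_one₀ (le_of_lt hy0) (le_of_lt hy1)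
    rw [hCv]
    linarith
  -- final contradiction using the entropy limit
  have hlogy : Real.log y > -h := by
    have := Real.log_lt_log hx0 hxy
    rw [hxdef, Real.log_exp] at this
    linarith
  set ε := (h + Real.log y) / 2 with hε
  have hεpos : 0 < ε := by rw [hε]; linarith
  have hlogCv : 0 ≤ Real.log Cv := Real.log_nonneg hCv1
  have hev1 : ∀ᶠ n : ℕ in atTop, h - ε < Real.log (aa n) / n :=
    hent.eventually (lt_mem_nhds (by linarith : h - ε < h))
  have hev2 : ∀ᶠ n : ℕ in atTop, Real.log Cv / ε < (n : ℝ) :=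
    tendsto_natCast_atTop_atTop.eventually_gt_atTop _
  have hev3 : ∀ᶠ n : ℕ in atTop, 1 ≤ n := eventually_ge_atTop 1
  obtain ⟨n, hn1, hn2, hn3⟩ := (hev1.and (hev2.and hev3)).exists
  have hnR : (0:ℝ) < (n : ℝ) := by exact_mod_cast hn3
  have ha : aa n ≤ Cv / y ^ n := by
    rw [le_div_iff₀ (by positivity)]
    calc aa n * y ^ n = y ^ n * aa n := by ring
      _ ≤ Cv := hAv n
  have hla : Real.log (aa n) ≤ Real.log Cv - (n : ℝ) * Real.log y := by
    have h0 : (0:ℝ) < aa n := by linarith [hann n]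
    have := Real.log_le_log h0 ha
    rw [Real.log_div (by positivity) (by positivity), Real.log_pow] at this
    linarith
  have hup : Real.log (aa n) / n ≤ Real.log Cv / n - Real.log y := by
    rw [div_le_iff₀ hnR]
    have : (Real.log Cv / n - Real.log y) * n = Real.log Cv - n * Real.log y := by
      field_simp
    rw [this]
    exact hla
  have hCvn : Real.log Cv / n < ε := by
    rw [div_lt_iff₀ hnR]
    calc Real.log Cv ≤ (Real.log Cv / ε) * ε := by
          rw [div_mul_cancel₀]
          exact ne_of_gt hεpos
      _ < (n:ℝ) * ε := mul_lt_mul_of_pos_right hn2 hεpos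
      _ = ε * (n:ℝ) := mul_comm _ _
  have : h - ε < ε - Real.log y := by
    calc h - ε < Real.log (aa n) / n := hn1
      _ ≤ Real.log Cv / n - Real.log y := hup
      _ < ε - Real.log y := by linarith
  rw [hε] at this
  linarith

end SGapAux

/-- Folklore formula: for `S ⊆ ℕ ∪ {0}` with `gcd(S+1) = 1` and `λ = e^{h_top(X_S)}`,
`∑_{n ∈ S} λ^{-n-1} = 1`. -/
theorem statement16 (S : Set ℕ)
    (hgcd : ∀ d : ℕ, (∀ n ∈ S, d ∣ n + 1) → d = 1)
    (h : ℝ)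
    (hent : Tendsto (fun n : ℕ => Real.log ((langF (Xgap S) n).ncard : ℝ) / (n : ℝ))
      atTop (𝓝 h)) :
    ∑' n : S, (Real.exp h) ^ (-((n : ℕ) : ℤ) - 1) = 1 := by
  classical
  have hGFeq : ∀ n : ℕ, ((langF (Xgap S) n).ncard : ℝ) = ((SGapAux.GF S n).card : ℝ) := by
    intro n
    congr 1
    rw [SGapAux.langF_eq S n]
    exact Set.ncard_eq_toFinset_card _ (Set.toFinite _)
  have hent' : Tendsto (fun n : ℕ => Real.log ((SGapAux.GF S n).card : ℝ) / n) atTop (𝓝 h) :=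
    hent.congr (fun n => by rw [hGFeq n])
  have hh0 : 0 ≤ h := by
    refine ge_of_tendsto hent' ?_
    filter_upwards [eventually_ge_atTop 1] with n hn
    have h1 : (1:ℝ) ≤ ((SGapAux.GF S n).card : ℝ) := by exact_mod_cast SGapAux.one_le_GF S n
    have h2 := Real.log_nonneg h1
    positivity
  rcases eq_or_lt_of_le hh0 with hzero | hpos
  · -- entropy zero case
    have hz : h = 0 := hzero.symm
    subst hz
    have hsub : S.Subsingleton := by
      intro s hs t ht
      by_contra hne
      have hA := SGapAux.claimA S 0 le_rfl hent' {s, t} (by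
        intro u hu
        simp only [Finset.coe_insert, Finset.coe_singleton, Set.mem_insert_iff,
          Set.mem_singleton_iff] at hu
        rcases hu with rfl | rfl
        · exact hs
        · exact ht)
      rw [Finset.sum_pair hne, neg_zero, Real.exp_zero, one_pow, one_pow] at hA
      linarith
    have hSne : S.Nonempty := by
      by_contra hemp
      rw [Set.not_nonempty_iff_eq_empty] at hemp
      have := hgcd 2 (by intro n hn; rw [hemp] at hn; exact absurd hn (Set.notMem_empty n))
      omega
    obtain ⟨s0, hs0⟩ := hSne
    have hSeq : S = {s0} := by
      ext t
      constructor
      · intro ht; exact hsub ht hs0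
      · intro ht
        rw [Set.mem_singleton_iff] at ht
        rw [ht]; exact hs0
    rw [hSeq]
    rw [tsum_singleton s0 (fun n : ℕ => Real.exp 0 ^ (-(n : ℤ) - 1))]
    rw [Real.exp_zero, one_zpow]
  · -- positive entropy case
    set x := Real.exp (-h) with hxdef
    have hx0 : 0 < x := Real.exp_pos _
    have hx1 : x < 1 := Real.exp_lt_one_iff.2 (by linarith)
    have hsummable : Summable (Set.indicator S fun s : ℕ => x ^ (s + 1)) := by
      refine Summable.of_nonneg_of_le
        (fun s => Set.indicator_nonneg (fun s _ => by positivity) s)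
        (fun s => ?_) (summable_geometric_of_lt_one (le_of_lt hx0) hx1)
      by_cases hsS : s ∈ S
      · rw [Set.indicator_of_mem hsS]
        calc x ^ (s + 1) = x * x ^ s := by ring
          _ ≤ 1 * x ^ s := mul_le_mul_of_nonneg_right (by linarith) (by positivity)
          _ = x ^ s := one_mul _
      · rw [Set.indicator_of_notMem hsS]
        positivity
    have hle : (∑' s : ℕ, Set.indicator S (fun s => x ^ (s + 1)) s) ≤ 1 := by
      refine Summable.tsum_le_of_sum_le hsummable ?_
      intro u
      have hseq : ∑ s ∈ u, Set.indicator S (fun s => x ^ (s + 1)) s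
          = ∑ s ∈ u.filter (fun s => s ∈ S), x ^ (s + 1) := by
        rw [Finset.sum_filter]
        refine Finset.sum_congr rfl (fun s _ => ?_)
        by_cases hsS : s ∈ S
        · rw [Set.indicator_of_mem hsS, if_pos hsS]
        · rw [Set.indicator_of_notMem hsS, if_neg hsS]
      rw [hseq]
      refine SGapAux.claimA S h hh0 hent' (u.filter (fun s => s ∈ S)) ?_
      intro s hsmem
      simp only [Finset.coe_filter, Set.mem_setOf_eq] at hsmem
      exact hsmem.2
    have hge : ¬ (∑' s : ℕ, Set.indicator S (fun s => x ^ (s + 1)) s) < 1 :=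
      fun hlt => SGapAux.claimB S h hpos hent' hlt
    have heq1 : (∑' s : ℕ, Set.indicator S (fun s => x ^ (s + 1)) s) = 1 :=
      le_antisymm hle (not_lt.1 hge)
    have hterm : ∀ n : S, Real.exp h ^ (-((n : ℕ) : ℤ) - 1) = x ^ ((n : ℕ) + 1) := by
      intro n
      have he : (-((n : ℕ) : ℤ) - 1) = -((((n : ℕ) + 1 : ℕ)) : ℤ) := by push_cast; ring
      rw [he, zpow_neg, zpow_natCast, ← inv_pow]
      congr 1
      rw [hxdef, ← Real.exp_neg]
    calc ∑' n : S, Real.exp h ^ (-((n : ℕ) : ℤ) - 1)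
        = ∑' n : S, x ^ ((n : ℕ) + 1) := tsum_congr hterm
      _ = ∑' s : ℕ, Set.indicator S (fun s => x ^ (s + 1)) s :=
          tsum_subtype S (fun s => x ^ (s + 1))
      _ = 1 := heq1
end
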